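/- arXiv:2312.09363 — 8 statements merged into one kernel-verified Lean document; each statement's English description precedes it below -/
import Mathlib

section
/- Let (X,d) be a proper metric space with a fixed basepoint x₀. Then the collection of all closed subsets of X is totally bounded with respect to ρ: for every ε > 0 there exists a finite family 𝒜 of subsets of X such that for every closed subset D ⊆ X there is A ∈ 𝒜 with ρ(D,A) ≤ ε. -/
open Metric Set Filter

/-- The metric ρ on subsets of `X` (with basepoint `x₀`), following Smilansky–Solomon. -/
noncomputable def rho {X : Type*} [MetricSpace X] (x₀ : X) (D₁ D₂ : Set X) : ℝ :=
  sInf ({ε : ℝ | 0 < ε ∧ D₁ ∩ ball x₀ (1 / ε) ⊆ thickening ε D₂ ∧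
      D₂ ∩ ball x₀ (1 / ε) ⊆ thickening ε D₁} ∪ {1})

/-- The collection of all closed subsets of a proper metric space is totally bounded
with respect to `ρ`. -/
theorem closedSubsets_totallyBounded_rho {X : Type*} [MetricSpace X] [ProperSpace X]
    (x₀ : X) :
    ∀ ε > (0 : ℝ), ∃ 𝒜 : Finset (Set X), ∀ D : Set X, IsClosed D →
      ∃ A ∈ 𝒜, rho x₀ D A ≤ ε := by
  intro ε hε
  classical
  obtain ⟨t, htf, htsub⟩ := (totallyBounded_iff.mp
    (isCompact_closedBall x₀ (1/ε)).totallyBounded) (ε/2) (by linarith)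
  obtain ⟨N, hN⟩ := htf.exists_finset_coe
  refine ⟨N.powerset.image (fun s : Finset X => {x | x ∈ s} : Finset X → Set X), ?_⟩
  intro D _
  set A : Finset X := N.filter (fun n => ∃ d ∈ D, dist n d < ε/2) with hA
  refine ⟨(↑A : Set X), ?_, ?_⟩
  · simp only [Finset.mem_image, Finset.mem_powerset]
    exact ⟨A, Finset.filter_subset _ _, rfl⟩
  · apply csInf_le
    · refine ⟨0, ?_⟩
      rintro x (⟨hx, -⟩ | rfl)
      · exact le_of_lt hx
      · norm_num
    · left
      refine ⟨hε, ?_, ?_⟩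
      · rintro x ⟨hxD, hxb⟩
        have hxcb : x ∈ closedBall x₀ (1/ε) := ball_subset_closedBall hxb
        have := htsub hxcb
        simp only [mem_iUnion, mem_ball] at this
        obtain ⟨y, hy, hxy⟩ := this
        have hyN : y ∈ N := by rw [← hN] at hy; exact_mod_cast hy
        have hyA : y ∈ A := Finset.mem_filter.mpr
          ⟨hyN, ⟨x, hxD, by rw [dist_comm]; exact hxy⟩⟩
        exact mem_thickening_iff.mpr ⟨y, by exact_mod_cast hyA, by linarith⟩
      · rintro x ⟨hxA, -⟩
        have hxA' : x ∈ A := by exact_mod_cast hxA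
        obtain ⟨d, hdD, hxd⟩ := (Finset.mem_filter.mp hxA').2
        exact mem_thickening_iff.mpr ⟨d, hdD, by linarith⟩
end

section
/- Let (X,d) be a metric space with a fixed basepoint x₀, let s > 0, and let (D_n) be a sequence of s-discrete subsets of X. If E ⊆ X is a subset with ρ(D_n, E) → 0 as n → ∞, then E is s-discrete, i.e. d(x,y) ≥ s for all distinct x,y ∈ E. -/
open Metric Set Filter

/-- `D` is `s`-discrete: distinct points of `D` are at distance at least `s`. -/
def IsDiscreteWith {X : Type*} [MetricSpace X] (s : ℝ) (D : Set X) : Prop :=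
  ∀ x ∈ D, ∀ y ∈ D, x ≠ y → s ≤ dist x y

/-- A `ρ`-limit of `s`-discrete sets is `s`-discrete. -/
theorem limit_isDiscreteWith {X : Type*} [MetricSpace X] (x₀ : X)
    (s : ℝ) (hs : 0 < s) (D : ℕ → Set X)
    (hD : ∀ n, IsDiscreteWith s (D n)) (E : Set X)
    (hconv : Tendsto (fun n => rho x₀ (D n) E) atTop (nhds 0)) :
    IsDiscreteWith s E := by
  intro x hx y hy hxy
  by_contra h
  push_neg at h
  have hd : 0 < dist x y := dist_pos.2 hxy
  set c : ℝ := 1 + dist x x₀ + dist y x₀ with hc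
  have hcpos : 0 < c := by positivity
  set ε : ℝ := min 1 (min (dist x y / 2) (min ((s - dist x y) / 2) (1 / c))) with hεdef
  have hεpos : 0 < ε := by
    apply lt_min one_pos
    apply lt_min (by linarith)
    exact lt_min (by linarith) (by positivity)
  obtain ⟨N, hN⟩ := (Metric.tendsto_atTop.mp hconv) ε hεpos
  have hrho : rho x₀ (D N) E < ε := by
    have := hN N le_rfl
    rw [Real.dist_eq, sub_zero] at this
    exact lt_of_le_of_lt (le_abs_self _) this
  set S : Set ℝ := {ε : ℝ | 0 < ε ∧ D N ∩ ball x₀ (1 / ε) ⊆ thickening ε E ∧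
      E ∩ ball x₀ (1 / ε) ⊆ thickening ε (D N)} ∪ {1} with hS
  have hSne : S.Nonempty := ⟨1, Or.inr rfl⟩
  have hSbdd : BddBelow S := by
    refine ⟨0, fun a ha => ?_⟩
    rcases ha with ⟨ha, _⟩ | ha
    · exact ha.le
    · simp only [mem_singleton_iff] at ha; simp [ha]
  have hinf : sInf S < ε := hrho
  obtain ⟨a, haS, haε⟩ := (csInf_lt_iff hSbdd hSne).mp hinf
  rcases haS with ⟨hapos, _, hsub⟩ | ha1
  · -- a is a genuine element
    have hac : a < 1 / c := lt_of_lt_of_le haε (le_trans (min_le_right _ _)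
      (le_trans (min_le_right _ _) (min_le_right _ _)))
    have haxy2 : a < dist x y / 2 := lt_of_lt_of_le haε (le_trans (min_le_right _ _)
      (min_le_left _ _))
    have has : a < (s - dist x y) / 2 := lt_of_lt_of_le haε (le_trans (min_le_right _ _)
      (le_trans (min_le_right _ _) (min_le_left _ _)))
    have hca : c < 1 / a := by
      rw [lt_div_iff₀ hapos]
      calc c * a < c * (1 / c) := by exact mul_lt_mul_of_pos_left hac hcpos
        _ = 1 := mul_one_div_cancel hcpos.ne'
    have hxball : x ∈ ball x₀ (1 / a) := by
      rw [mem_ball]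
      calc dist x x₀ ≤ c := by rw [hc]; have := dist_nonneg (x := y) (y := x₀); linarith
        _ < 1 / a := hca
    have hyball : y ∈ ball x₀ (1 / a) := by
      rw [mem_ball]
      calc dist y x₀ ≤ c := by rw [hc]; have := dist_nonneg (x := x) (y := x₀); linarith
        _ < 1 / a := hca
    obtain ⟨p, hp, hxp⟩ := mem_thickening_iff.mp (hsub ⟨hx, hxball⟩)
    obtain ⟨q, hq, hyq⟩ := mem_thickening_iff.mp (hsub ⟨hy, hyball⟩)
    by_cases hpq : p = q
    · subst hpq
      have : dist x y ≤ dist x p + dist p y := dist_triangle _ _ _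
      rw [dist_comm p y] at this
      linarith
    · have hsle : s ≤ dist p q := hD N p hp q hq hpq
      have : dist p q ≤ dist p x + dist x y + dist y q := dist_triangle4 _ _ _ _
      rw [dist_comm p x] at this
      linarith
  · simp only [mem_singleton_iff] at ha1
    subst ha1
    have : ε ≤ 1 := min_le_left _ _
    linarith
end

section
/- Let (X,d,μ) be a metric measure space of bounded geometry and let D ⊆ X be an (r,R)-Delone set. Then there exists a family {φ_u}_{u∈D} of functions φ_u : X → [0,1] such that: (p1) φ_u(x) = 0 whenever d(x,u) ≥ 2R, for every u ∈ D; (p2) φ_u(x) = 1 for every x with d(x,u) < r/6; (p3) Σ_{u∈D} φ_u(x) = 1 for every x ∈ X; and (p4) there exists L > 0 such that every φ_u is L-Lipschitz. -/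
open Metric Set MeasureTheory ENNReal

/-- `D` is `R`-dense: every point of `X` is within distance `R` of `D`. -/
def IsDenseWith {X : Type*} [MetricSpace X] (R : ℝ) (D : Set X) : Prop :=
  ∀ x : X, ∃ y ∈ D, dist x y ≤ R

/-- A metric measure space of bounded geometry. -/
def BoundedGeometry {X : Type*} [MetricSpace X] [MeasurableSpace X] (μ : Measure X) : Prop :=
  ∀ R > (0 : ℝ), ∃ c C : ℝ≥0∞, 0 < c ∧ C < ⊤ ∧
    ∀ x : X, c ≤ μ (ball x R) ∧ μ (ball x R) ≤ C

section Aux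

open scoped Classical

variable {X : Type*} [MetricSpace X]

/-- The bump function at `u ∈ D`. -/
noncomputable def psiAux (D : Set X) (r R : ℝ) (u x : X) : ℝ :=
  max 0 (min (min 1 ((2*R - dist x u)/R))
    (if (D \ {u}).Nonempty then (12/r) * (Metric.infDist x (D \ {u}) - r/6) else 1))

lemma psiAux_nonneg (D : Set X) (r R : ℝ) (u x : X) : 0 ≤ psiAux D r R u x :=
  le_max_left _ _

lemma psiAux_le_one (D : Set X) (r R : ℝ) (u x : X) : psiAux D r R u x ≤ 1 := by
  unfold psiAux
  exact max_le zero_le_one (le_trans (min_le_left _ _) (min_le_left _ _))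

lemma psiAux_eq_zero_of_far (D : Set X) {R : ℝ} (r : ℝ) (hR : 0 < R) {u x : X}
    (h : 2*R ≤ dist x u) : psiAux D r R u x = 0 := by
  unfold psiAux
  have h1 : (2*R - dist x u)/R ≤ 0 :=
    div_nonpos_iff.2 (Or.inr ⟨by linarith, hR.le⟩)
  exact max_eq_left (le_trans (min_le_left _ _) (le_trans (min_le_right _ _) h1))

lemma psiAux_eq_zero_of_near_other (D : Set X) {r : ℝ} (R : ℝ) (hr : 0 < r)
    {u v x : X} (hu : u ∈ D) (hne : u ≠ v) (h : dist x u < r/6) :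
    psiAux D r R v x = 0 := by
  unfold psiAux
  have hne' : (D \ {v}).Nonempty := ⟨u, hu, hne⟩
  rw [if_pos hne']
  have h1 : Metric.infDist x (D \ {v}) ≤ dist x u :=
    Metric.infDist_le_dist_of_mem ⟨hu, hne⟩
  have h2 : (12/r) * (Metric.infDist x (D \ {v}) - r/6) ≤ 0 := by
    apply mul_nonpos_of_nonneg_of_nonpos (by positivity)
    linarith
  exact max_eq_left (le_trans (min_le_right _ _) h2)

lemma psiAux_eq_one (D : Set X) {r R : ℝ} (hr : 0 < r) (hR : 0 < R) {u x : X}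
    (hd : dist x u ≤ R) (hfar : ∀ w ∈ D, w ≠ u → r/4 ≤ dist x w) :
    psiAux D r R u x = 1 := by
  unfold psiAux
  have hA : (1 : ℝ) ≤ (2*R - dist x u)/R := by
    rw [le_div_iff₀ hR]; linarith
  have hB : (1 : ℝ) ≤
      (if (D \ {u}).Nonempty then (12/r) * (Metric.infDist x (D \ {u}) - r/6) else 1) := by
    split_ifs with hne
    · have hinf : r/4 ≤ Metric.infDist x (D \ {u}) := by
        by_contra hlt
        push_neg at hlt
        obtain ⟨w, ⟨hwD, hwne⟩, hw⟩ := (Metric.infDist_lt_iff hne).1 hlt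
        exact absurd hw (not_lt.2 (hfar w hwD hwne))
      have h12 : (0:ℝ) < 12/r := by positivity
      have hmul : (12/r) * (r/12) ≤ (12/r) * (Metric.infDist x (D \ {u}) - r/6) := by
        apply mul_le_mul_of_nonneg_left _ h12.le
        linarith
      have hid : (12/r) * (r/12) = 1 := by field_simp
      linarith
    · exact le_refl 1
  rw [min_eq_left hA, min_eq_left hB, max_eq_right zero_le_one]

lemma psiAux_exists_one {D : Set X} {r R : ℝ} (hr : 0 < r) (hR : 0 < R)
    (hdisc : IsDiscreteWith r D) (hdense : IsDenseWith R D) (x : X) :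
    ∃ u ∈ D, psiAux D r R u x = 1 := by
  obtain ⟨u, hu, hdu⟩ := hdense x
  by_cases h : ∃ v ∈ D, v ≠ u ∧ dist x v < r/4
  · obtain ⟨v, hv, hvu, hxv⟩ := h
    have hruv : r ≤ dist u v := hdisc u hu v hv (Ne.symm hvu)
    have htri : dist u v ≤ dist u x + dist x v := dist_triangle u x v
    rw [dist_comm u x] at htri
    refine ⟨v, hv, psiAux_eq_one D hr hR (by linarith) ?_⟩
    intro w hw hwv
    have h1 : r ≤ dist v w := hdisc v hv w hw (Ne.symm hwv)
    have h2 : dist v w ≤ dist v x + dist x w := dist_triangle v x w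
    rw [dist_comm v x] at h2
    linarith
  · push_neg at h
    exact ⟨u, hu, psiAux_eq_one D hr hR hdu fun w hw hwu => h w hw hwu⟩

lemma psiAux_lipschitz_bound (D : Set X) {r R : ℝ} (hr : 0 < r) (hR : 0 < R)
    (u x y : X) :
    |psiAux D r R u x - psiAux D r R u y| ≤ (max (1/R) (12/r)) * dist x y := by
  set Λ : ℝ := max (1/R) (12/r) with hΛ
  have hd : (0:ℝ) ≤ dist x y := dist_nonneg
  have hΛd : (0:ℝ) ≤ Λ * dist x y :=
    mul_nonneg (le_max_of_le_left (by positivity : (0:ℝ) ≤ 1/R)) hd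
  have hA : |(2*R - dist x u)/R - (2*R - dist y u)/R| ≤ Λ * dist x y := by
    have he : (2*R - dist x u)/R - (2*R - dist y u)/R = (dist y u - dist x u)/R := by
      field_simp
      ring
    rw [he, abs_div, abs_of_pos hR, div_le_iff₀ hR]
    have h1 : |dist y u - dist x u| ≤ dist x y := by
      rw [abs_sub_comm]
      exact abs_dist_sub_le x y u
    have h2 : (1/R) * dist x y ≤ Λ * dist x y :=
      mul_le_mul_of_nonneg_right (le_max_left _ _) hd
    calc |dist y u - dist x u| ≤ dist x y := h1
      _ = (1/R) * dist x y * R := by field_simp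
      _ ≤ Λ * dist x y * R := mul_le_mul_of_nonneg_right h2 hR.le
  have hB : |(if (D \ {u}).Nonempty then (12/r) * (Metric.infDist x (D \ {u}) - r/6) else 1)
      - (if (D \ {u}).Nonempty then (12/r) * (Metric.infDist y (D \ {u}) - r/6) else 1)|
      ≤ Λ * dist x y := by
    split_ifs with hne
    · have he : (12/r) * (Metric.infDist x (D \ {u}) - r/6)
          - (12/r) * (Metric.infDist y (D \ {u}) - r/6)
          = (12/r) * (Metric.infDist x (D \ {u}) - Metric.infDist y (D \ {u})) := by ring
      rw [he, abs_mul, abs_of_pos (by positivity : (0:ℝ) < 12/r)]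
      have h1 : |Metric.infDist x (D \ {u}) - Metric.infDist y (D \ {u})| ≤ dist x y := by
        rw [abs_sub_le_iff]
        constructor
        · have := Metric.infDist_le_infDist_add_dist (x := x) (y := y) (s := D \ {u})
          linarith
        · have := Metric.infDist_le_infDist_add_dist (x := y) (y := x) (s := D \ {u})
          rw [dist_comm y x] at this
          linarith
      calc (12/r) * |Metric.infDist x (D \ {u}) - Metric.infDist y (D \ {u})|
          ≤ (12/r) * dist x y := mul_le_mul_of_nonneg_left h1 (by positivity)
        _ ≤ Λ * dist x y := mul_le_mul_of_nonneg_right (le_max_right _ _) hd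
    · simpa using hΛd
  unfold psiAux
  refine le_trans (abs_max_sub_max_le_max _ _ _ _) (max_le (by simpa using hΛd) ?_)
  refine le_trans (abs_min_sub_min_le_max _ _ _ _) (max_le ?_ hB)
  refine le_trans (abs_min_sub_min_le_max _ _ _ _) (max_le ?_ hA)
  simpa using hΛd

end Aux

/-- Uniform bound on the number of points of `D` in balls of radius `3R`. -/
lemma delone_count_bound {X : Type*} [MetricSpace X]
    [MeasurableSpace X] [BorelSpace X] (μ : Measure X) (hbg : BoundedGeometry μ)
    (D : Set X) (r R : ℝ) (hr : 0 < r) (hR : 0 < R)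
    (hdisc : IsDiscreteWith r D) :
    ∃ N : ℕ, ∀ x : X, ∀ F : Finset X, ↑F ⊆ D ∩ ball x (3*R) → F.card ≤ N := by
  obtain ⟨c, C1, hc, hC1, h1⟩ := hbg (r/2) (by positivity)
  obtain ⟨c2, C, hc2, hC, h2⟩ := hbg (3*R + r/2) (by positivity)
  refine ⟨⌈(C/c).toReal⌉₊, fun x F hF => ?_⟩
  have hdisj : (↑F : Set X).PairwiseDisjoint (fun v => ball v (r/2)) := by
    intro u hu v hv huv
    have hu' : u ∈ D := (hF hu).1
    have hv' : v ∈ D := (hF hv).1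
    exact ball_disjoint_ball (by linarith [hdisc u hu' v hv' huv])
  have hmeas : μ (⋃ v ∈ F, ball v (r/2)) = ∑ v ∈ F, μ (ball v (r/2)) :=
    measure_biUnion_finset hdisj (fun v _ => measurableSet_ball)
  have hsub : (⋃ v ∈ F, ball v (r/2)) ⊆ ball x (3*R + r/2) := by
    intro z hz
    simp only [mem_iUnion] at hz
    obtain ⟨v, hv, hzv⟩ := hz
    have h3 : dist v x < 3*R := by
      have := (hF hv).2
      rwa [mem_ball] at this
    rw [mem_ball] at hzv ⊢
    calc dist z x ≤ dist z v + dist v x := dist_triangle z v x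
      _ < r/2 + 3*R := by linarith
      _ = 3*R + r/2 := by ring
  have hle : (F.card : ℝ≥0∞) * c ≤ C := by
    calc (F.card : ℝ≥0∞) * c = F.card • c := by rw [nsmul_eq_mul]
      _ ≤ ∑ v ∈ F, μ (ball v (r/2)) :=
          Finset.card_nsmul_le_sum F _ c (fun v _ => (h1 v).1)
      _ = μ (⋃ v ∈ F, ball v (r/2)) := hmeas.symm
      _ ≤ μ (ball x (3*R + r/2)) := measure_mono hsub
      _ ≤ C := (h2 x).2
  have hdiv : (F.card : ℝ≥0∞) ≤ C / c :=
    (ENNReal.le_div_iff_mul_le (Or.inl hc.ne') (Or.inr hC.ne)).2 hle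
  have hfin : C / c ≠ ⊤ := (ENNReal.div_lt_top hC.ne hc.ne').ne
  have hreal : (F.card : ℝ) ≤ (C/c).toReal := by
    have := ENNReal.toReal_mono hfin hdiv
    simpa using this
  have hfinal : (F.card : ℝ) ≤ (⌈(C/c).toReal⌉₊ : ℝ) := hreal.trans (Nat.le_ceil _)
  exact_mod_cast hfinal

/-- Existence of a partition of unity `{φ_u}_{u ∈ D}` subordinate to an `(r,R)`-Delone
set `D` in a metric measure space of bounded geometry, satisfying (p1)–(p4). -/
theorem exists_partition_of_unity {X : Type*} [MetricSpace X]
    [MeasurableSpace X] [BorelSpace X] (μ : Measure X) (hbg : BoundedGeometry μ)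
    (D : Set X) (r R : ℝ) (hr : 0 < r) (hR : 0 < R)
    (hdisc : IsDiscreteWith r D) (hdense : IsDenseWith R D) :
    ∃ φ : X → X → ℝ,
      (∀ u ∈ D, ∀ x : X, φ u x ∈ Icc (0 : ℝ) 1) ∧
      (∀ u ∈ D, ∀ x : X, 2 * R ≤ dist x u → φ u x = 0) ∧
      (∀ u ∈ D, ∀ x : X, dist x u < r / 6 → φ u x = 1) ∧
      (∀ x : X, HasSum (fun u : D => φ u.1 x) 1) ∧
      (∃ L : NNReal, 0 < L ∧ ∀ u ∈ D, LipschitzWith L (φ u)) := by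
  classical
  obtain ⟨N, hN⟩ := delone_count_bound μ hbg D r R hr hR hdisc
  set ψ : X → X → ℝ := psiAux D r R with hψdef
  set Λ : ℝ := max (1/R) (12/r) with hΛdef
  have hΛpos : 0 < Λ := lt_max_of_lt_left (by positivity)
  -- finiteness of D ∩ ball x (3R)
  have hfin : ∀ x : X, (D ∩ ball x (3*R)).Finite := by
    intro x
    rw [← Set.not_infinite]
    intro h
    obtain ⟨F, hF, hcard⟩ := h.exists_subset_card_eq (N+1)
    have := hN x F hF
    omega
  -- finset of relevant indices
  set G : X → Finset ↥D := fun x => ((hfin x).toFinset.subtype (· ∈ D)) with hGdef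
  have hGmem : ∀ (x : X) (v : ↥D), v ∈ G x ↔ v.1 ∈ D ∩ ball x (3*R) := by
    intro x v
    simp [hGdef, Set.Finite.mem_toFinset]
  have hGsupp : ∀ (x : X) (v : ↥D), v ∉ G x → ψ v.1 x = 0 := by
    intro x v hv
    apply psiAux_eq_zero_of_far D r hR
    have hb : v.1 ∉ ball x (3*R) := fun hb => hv ((hGmem x v).2 ⟨v.2, hb⟩)
    rw [mem_ball] at hb
    push_neg at hb
    rw [dist_comm]
    linarith
  set S : X → ℝ := fun x => ∑ v ∈ G x, ψ v.1 x with hSdef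
  have hSsum : ∀ x, HasSum (fun v : ↥D => ψ v.1 x) (S x) := fun x =>
    hasSum_sum_of_ne_finset_zero (hGsupp x)
  have hS1 : ∀ x, 1 ≤ S x := by
    intro x
    obtain ⟨u, hu, hone⟩ := psiAux_exists_one hr hR hdisc hdense x
    have hle := le_hasSum (hSsum x) ⟨u, hu⟩ (fun j _ => psiAux_nonneg D r R j.1 x)
    calc (1:ℝ) = ψ u x := hone.symm
      _ ≤ S x := hle
  have hSpos : ∀ x, 0 < S x := fun x => lt_of_lt_of_le one_pos (hS1 x)
  have hGcard : ∀ x, (G x).card ≤ N := by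
    intro x
    have h1 : (G x).card ≤ (hfin x).toFinset.card := by
      rw [hGdef]
      simpa [Finset.card_subtype] using Finset.card_filter_le (hfin x).toFinset (· ∈ D)
    exact h1.trans (hN x _ (by simp [Set.Finite.coe_toFinset]))
  have hSle : ∀ x, S x ≤ N := by
    intro x
    calc S x ≤ ∑ _v ∈ G x, (1:ℝ) :=
          Finset.sum_le_sum fun v _ => psiAux_le_one D r R v.1 x
      _ = (G x).card := by simp
      _ ≤ N := by exact_mod_cast hGcard x
  set L0 : ℝ := N * Λ + N / R with hL0def
  have hL0nonneg : 0 ≤ L0 := by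
    have : (0:ℝ) ≤ N * Λ := mul_nonneg (Nat.cast_nonneg N) hΛpos.le
    have : (0:ℝ) ≤ N / R := by positivity
    rw [hL0def]; positivity
  have hSlip : ∀ x y, |S x - S y| ≤ L0 * dist x y := by
    intro x y
    rcases le_or_gt (dist x y) R with hcase | hcase
    · -- common support finset G x
      have hy : S y = ∑ v ∈ G x, ψ v.1 y := by
        refine (hSsum y).unique (hasSum_sum_of_ne_finset_zero ?_)
        intro v hv
        apply psiAux_eq_zero_of_far D r hR
        have hb : v.1 ∉ ball x (3*R) := fun hb => hv ((hGmem x v).2 ⟨v.2, hb⟩)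
        rw [mem_ball] at hb
        push_neg at hb
        have htri : dist v.1 x ≤ dist v.1 y + dist y x := dist_triangle v.1 y x
        rw [dist_comm y x] at htri
        rw [dist_comm]
        linarith
      have hterm : ∀ v ∈ G x, |ψ v.1 x - ψ v.1 y| ≤ Λ * dist x y := fun v _ =>
        psiAux_lipschitz_bound D hr hR v.1 x y
      have hsum : |S x - S y| ≤ (G x).card * (Λ * dist x y) := by
        rw [hy, hSdef]
        simp only [← Finset.sum_sub_distrib]
        calc |∑ v ∈ G x, (ψ v.1 x - ψ v.1 y)| ≤ ∑ v ∈ G x, |ψ v.1 x - ψ v.1 y| :=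
              Finset.abs_sum_le_sum_abs _ _
          _ ≤ ∑ _v ∈ G x, Λ * dist x y := Finset.sum_le_sum hterm
          _ = (G x).card * (Λ * dist x y) := by
              rw [Finset.sum_const, nsmul_eq_mul]
      have hΛd : (0:ℝ) ≤ Λ * dist x y := mul_nonneg hΛpos.le dist_nonneg
      have hcard : ((G x).card : ℝ) ≤ N := by exact_mod_cast hGcard x
      have hNd : (0:ℝ) ≤ (N : ℝ) / R * dist x y := by positivity
      calc |S x - S y| ≤ (G x).card * (Λ * dist x y) := hsum
        _ ≤ N * (Λ * dist x y) := mul_le_mul_of_nonneg_right hcard hΛd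
        _ ≤ L0 * dist x y := by
            rw [hL0def, add_mul]
            have : ↑N * (Λ * dist x y) = ↑N * Λ * dist x y := by ring
            rw [this]
            linarith [hNd]
    · -- large distance
      have h1 : |S x - S y| ≤ (N : ℝ) := by
        rw [abs_sub_le_iff]
        constructor <;> [linarith [hSle x, hS1 y]; linarith [hSle y, hS1 x]]
      have h2 : (N : ℝ) ≤ (N : ℝ)/R * dist x y := by
        rw [div_mul_eq_mul_div, le_div_iff₀ hR]
        have : (0:ℝ) ≤ (N:ℝ) := Nat.cast_nonneg N
        nlinarith
      have h3 : (0:ℝ) ≤ N * Λ * dist x y :=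
        mul_nonneg (mul_nonneg (Nat.cast_nonneg N) hΛpos.le) dist_nonneg
      calc |S x - S y| ≤ (N : ℝ) := h1
        _ ≤ (N : ℝ)/R * dist x y := h2
        _ ≤ L0 * dist x y := by
            rw [hL0def, add_mul]
            linarith [h3]
  -- the partition of unity
  refine ⟨fun u x => ψ u x / S x, ?_, ?_, ?_, ?_, ?_⟩
  · intro u hu x
    constructor
    · exact div_nonneg (psiAux_nonneg D r R u x) (hSpos x).le
    · rw [div_le_one (hSpos x)]
      exact le_hasSum (hSsum x) ⟨u, hu⟩ (fun j _ => psiAux_nonneg D r R j.1 x)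
  · intro u _ x hx
    have hz : ψ u x = 0 := psiAux_eq_zero_of_far D r hR hx
    show ψ u x / S x = 0
    rw [hz, zero_div]
  · intro u hu x hx
    have key : ∀ v : ↥D, v ≠ ⟨u, hu⟩ → ψ v.1 x = 0 := by
      intro v hv
      refine psiAux_eq_zero_of_near_other D R hr hu ?_ hx
      intro he
      exact hv (Subtype.ext he.symm)
    have hSx : S x = ψ u x := by
      by_cases hmem : (⟨u, hu⟩ : ↥D) ∈ G x
      · rw [hSdef]
        exact Finset.sum_eq_single_of_mem _ hmem (fun v _ hvne => key v hvne)
      · exfalso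
        have hz : S x = 0 := by
          rw [hSdef]
          apply Finset.sum_eq_zero
          intro v hvG
          rcases eq_or_ne v ⟨u, hu⟩ with rfl | hvne
          · exact absurd hvG hmem
          · exact key v hvne
        linarith [hS1 x]
    show ψ u x / S x = 1
    rw [← hSx, div_self (hSpos x).ne']
  · intro x
    have h1 : HasSum (fun v : ↥D => ψ v.1 x * (S x)⁻¹) (S x * (S x)⁻¹) :=
      (hSsum x).mul_right _
    rw [mul_inv_cancel₀ (hSpos x).ne'] at h1
    exact h1
  · refine ⟨⟨Λ + L0, by positivity⟩, ?_, ?_⟩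
    · apply NNReal.coe_pos.1
      show (0:ℝ) < Λ + L0
      linarith
    · intro u _
      apply LipschitzWith.of_dist_le_mul
      intro x y
      rw [Real.dist_eq]
      show |ψ u x / S x - ψ u y / S y| ≤ (Λ + L0) * dist x y
      have key1 : |ψ u x / S x - ψ u y / S x| ≤ Λ * dist x y := by
        rw [div_sub_div_same, abs_div, abs_of_pos (hSpos x)]
        exact (div_le_self (abs_nonneg _) (hS1 x)).trans
          (psiAux_lipschitz_bound D hr hR u x y)
      have key2 : |ψ u y / S x - ψ u y / S y| ≤ L0 * dist x y := by
        have he : ψ u y / S x - ψ u y / S y = ψ u y * (S y - S x) / (S x * S y) := by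
          field_simp [(hSpos x).ne', (hSpos y).ne']
        rw [he, abs_div, abs_mul, abs_of_pos (mul_pos (hSpos x) (hSpos y)),
          div_le_iff₀ (mul_pos (hSpos x) (hSpos y))]
        have h1 : |ψ u y| ≤ 1 := by
          rw [abs_le]
          exact ⟨by linarith [psiAux_nonneg D r R u y], psiAux_le_one D r R u y⟩
        have h2 : |S y - S x| ≤ L0 * dist x y := by
          rw [abs_sub_comm]; exact hSlip x y
        have h3 : (1:ℝ) ≤ S x * S y := by nlinarith [hS1 x, hS1 y]
        have h4 : (0:ℝ) ≤ |S y - S x| := abs_nonneg _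
        have h5 : (0:ℝ) ≤ L0 * dist x y := mul_nonneg hL0nonneg dist_nonneg
        have h6 : (0:ℝ) ≤ |ψ u y| := abs_nonneg _
        nlinarith
      calc |ψ u x / S x - ψ u y / S y|
          ≤ |ψ u x / S x - ψ u y / S x| + |ψ u y / S x - ψ u y / S y| :=
            abs_sub_le _ _ _
        _ ≤ Λ * dist x y + L0 * dist x y := add_le_add key1 key2
        _ = (Λ + L0) * dist x y := by ring
end

section
/- Let (X,d) be a metric space and let D ⊆ X be an (r,R)-Delone set. For u ∈ D set W_u = B_{2R}(u) \ ⋃_{v∈D, v≠u} \overline{B_{r/6}(v)} (the open ball of radius 2R around u minus the union of the closed balls of radius r/6 around all other points of D). Then {W_u}_{u∈D} is an open cover of X, and its Lebesgue number is positive: setting a = min(5r/12, r/4, R), for every x ∈ X there exists u ∈ D with B_a(x) ⊆ W_u. -/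
open Metric Set

/-- For an `(r,R)`-Delone set `D`, the sets
`W_u = B_{2R}(u) \ ⋃_{v ∈ D, v ≠ u} closedBall v (r/6)` form an open cover of `X`
with Lebesgue number at least `a = min (5r/12) (min (r/4) R)`. -/
theorem voronoi_type_cover {X : Type*} [MetricSpace X]
    (D : Set X) (r R : ℝ) (hr : 0 < r) (hR : 0 < R)
    (hdisc : IsDiscreteWith r D) (hdense : IsDenseWith R D) :
    (∀ u ∈ D, IsOpen (ball u (2 * R) \ ⋃ v ∈ D \ {u}, closedBall v (r / 6))) ∧
    (∀ x : X, ∃ u ∈ D, ball x (min (5 * r / 12) (min (r / 4) R)) ⊆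
      ball u (2 * R) \ ⋃ v ∈ D \ {u}, closedBall v (r / 6)) := by
  constructor
  · intro u hu
    apply IsOpen.sdiff isOpen_ball
    rw [← isOpen_compl_iff, Metric.isOpen_iff]
    intro x hx
    simp only [mem_compl_iff, mem_iUnion, mem_closedBall, mem_diff, mem_singleton_iff,
      not_exists, not_and, not_le] at hx
    by_cases h : ∃ v, v ∈ D ∧ v ≠ u ∧ dist x v ≤ r / 3
    · obtain ⟨v0, hv0D, hv0u, hv0⟩ := h
      have h1 : r / 6 < dist x v0 := hx v0 ⟨hv0D, hv0u⟩
      refine ⟨min (dist x v0 - r / 6) (r / 3), lt_min (by linarith) (by linarith), ?_⟩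
      intro y hy
      simp only [mem_ball] at hy
      simp only [mem_compl_iff, mem_iUnion, mem_closedBall, mem_diff, mem_singleton_iff,
        not_exists, not_and, not_le]
      rintro w ⟨hwD, hwu⟩
      have hxy : dist x y < min (dist x v0 - r / 6) (r / 3) := by
        rwa [dist_comm]
      by_cases hwv : w = v0
      · subst hwv
        have := dist_triangle x y w
        have h2 := min_le_left (dist x w - r / 6) (r / 3)
        linarith
      · have hd : r ≤ dist w v0 := hdisc w hwD v0 hv0D hwv
        have t1 := dist_triangle w x v0
        have t2 := dist_triangle x y w
        have h2 := min_le_right (dist x v0 - r / 6) (r / 3)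
        rw [dist_comm w x] at t1
        linarith
    · push_neg at h
      refine ⟨r / 6, by positivity, ?_⟩
      intro y hy
      simp only [mem_ball] at hy
      simp only [mem_compl_iff, mem_iUnion, mem_closedBall, mem_diff, mem_singleton_iff,
        not_exists, not_and, not_le]
      rintro w ⟨hwD, hwu⟩
      have h1 : r / 3 < dist x w := h w hwD hwu
      have t2 := dist_triangle x y w
      rw [dist_comm y x] at hy
      linarith
  · intro x
    obtain ⟨u0, hu0D, hu0⟩ := hdense x
    set a := min (5 * r / 12) (min (r / 4) R) with ha
    have ha1 : a ≤ 5 * r / 12 := min_le_left _ _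
    have ha2 : a ≤ r / 4 := le_trans (min_le_right _ _) (min_le_left _ _)
    have ha3 : a ≤ R := le_trans (min_le_right _ _) (min_le_right _ _)
    by_cases h : ∃ v, v ∈ D ∧ v ≠ u0 ∧ dist x v ≤ r / 6 + a
    · obtain ⟨v0, hv0D, hv0u, hv0⟩ := h
      have hxv0 : dist x v0 ≤ 5 * r / 12 := by linarith
      have hdu : r ≤ dist u0 v0 := hdisc u0 hu0D v0 hv0D (Ne.symm hv0u)
      have t0 := dist_triangle u0 x v0
      rw [dist_comm u0 x] at t0
      -- r ≤ R + 5r/12, so r ≤ 12R/7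
      have hrR : 7 * r ≤ 12 * R := by linarith
      refine ⟨v0, hv0D, ?_⟩
      intro y hy
      simp only [mem_ball] at hy
      rw [dist_comm y x] at hy
      constructor
      · rw [mem_ball]
        have t1 := dist_triangle y x v0
        rw [dist_comm y x] at t1
        linarith
      · simp only [mem_iUnion, mem_closedBall, mem_diff, mem_singleton_iff,
          not_exists, not_and, not_le]
        rintro w ⟨hwD, hwv0⟩
        have hd : r ≤ dist w v0 := hdisc w hwD v0 hv0D hwv0
        have t1 := dist_triangle w x v0
        have t2 := dist_triangle x y w
        rw [dist_comm w x] at t1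
        linarith
    · push_neg at h
      refine ⟨u0, hu0D, ?_⟩
      intro y hy
      simp only [mem_ball] at hy
      rw [dist_comm y x] at hy
      constructor
      · rw [mem_ball]
        have t1 := dist_triangle y x u0
        rw [dist_comm y x] at t1
        linarith
      · simp only [mem_iUnion, mem_closedBall, mem_diff, mem_singleton_iff,
          not_exists, not_and, not_le]
        rintro w ⟨hwD, hwu0⟩
        have h1 : r / 6 + a < dist x w := h w hwD hwu0
        have t2 := dist_triangle x y w
        linarith
end

section
/- Let (X,d,μ) be a metric measure space of bounded geometry, let D ⊆ X be an (r,R)-Delone set, and let {φ_u}_{u∈D} be a family of Borel measurable functions φ_u : X → [0,1] such that φ_u(x) = 0 whenever d(x,u) ≥ 2R, φ_u(x) = 1 whenever d(x,u) < r/6, and Σ_{u∈D} φ_u(x) = 1 for all x ∈ X (so each φ_u ∈ L²(X,μ)). Then there exists a bounded linear operator G on ℓ²(D) (over ℂ) such that ⟨δ_u, G δ_v⟩ = ∫_X φ_u φ_v dμ for all u,v ∈ D (δ_u denoting the standard basis vectors), and G is positive and invertible. -/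
open Metric Set MeasureTheory ENNReal
open scoped Classical

lemma aux_measurable_tsum {ι : Type*} [Countable ι] {α : Type*} [MeasurableSpace α]
    {f : ι → α → ℂ} (h : ∀ i, Measurable (f i)) (hs : ∀ x, Summable fun i => f i x) :
    Measurable fun x => ∑' i, f i x := by
  have : ∀ x, Filter.Tendsto (fun s : Finset ι => ∑ i ∈ s, f i x) Filter.atTop
      (nhds (∑' i, f i x)) := fun x => (hs x).hasSum
  exact measurable_of_tendsto_metrizable' Filter.atTop
    (fun s => Finset.measurable_sum s fun i _ => h i) (tendsto_pi_nhds.mpr this)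

lemma aux_card_smul_le {X : Type*} [MetricSpace X] [MeasurableSpace X] [BorelSpace X]
    {μ : Measure X} {D : Set X} {r : ℝ} (hr : 0 < r)
    (hdisc : IsDiscreteWith r D) {c : ℝ≥0∞} (hc : ∀ y : X, c ≤ μ (ball y (r/3)))
    (x : X) (ρ : ℝ) (F : Finset X) (hFD : ↑F ⊆ D) (hFx : ∀ u ∈ F, dist u x < ρ) :
    F.card • c ≤ μ (ball x (ρ + r)) := by
  have hdisj : (↑F : Set X).PairwiseDisjoint (fun u => ball u (r/3)) := by
    intro u hu v hv huv
    exact ball_disjoint_ball (by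
      have := hdisc u (hFD hu) v (hFD hv) huv
      linarith)
  have hsub : ∀ u ∈ F, ball u (r/3) ⊆ ball x (ρ + r) := by
    intro u hu y hy
    simp only [mem_ball] at hy ⊢
    have h1 : dist u x < ρ := hFx u hu
    have : dist y x ≤ dist y u + dist u x := dist_triangle _ _ _
    linarith
  calc F.card • c = ∑ u ∈ F, c := by simp
    _ ≤ ∑ u ∈ F, μ (ball u (r/3)) := Finset.sum_le_sum fun u _ => hc u
    _ = μ (⋃ u ∈ F, ball u (r/3)) :=
        (measure_biUnion_finset hdisj fun u _ => measurableSet_ball).symm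
    _ ≤ μ (ball x (ρ + r)) := measure_mono (iUnion₂_subset hsub)

lemma aux_finite_nbr {X : Type*} [MetricSpace X] [MeasurableSpace X] [BorelSpace X]
    {μ : Measure X} (hbg : BoundedGeometry μ) {D : Set X} {r : ℝ} (hr : 0 < r)
    (hdisc : IsDiscreteWith r D) (x : X) (ρ : ℝ) (hρ : 0 < ρ) :
    {u | u ∈ D ∧ dist u x < ρ}.Finite := by
  obtain ⟨c₁, C₁, hc₁, hC₁, h₁⟩ := hbg (r/3) (by positivity)
  obtain ⟨c₂, C₂, hc₂, hC₂, h₂⟩ := hbg (ρ + r) (by positivity)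
  have hc₁top : c₁ ≠ ⊤ := fun h => by
    have := (h₁ x).1.trans (h₁ x).2
    rw [h] at this
    exact hC₁.ne (top_le_iff.mp this)
  by_contra hinf
  rw [← Set.Infinite] at hinf
  obtain ⟨n, hn⟩ := ENNReal.exists_nat_gt (ENNReal.div_lt_top hC₂.ne hc₁.ne').ne
  obtain ⟨t, hts, htf, htc⟩ := hinf.exists_subset_ncard_eq n
  have hcard : (htf.toFinset.card : ℕ) = n := by
    rwa [Set.ncard_eq_toFinset_card _ htf] at htc
  have hle : htf.toFinset.card • c₁ ≤ μ (ball x (ρ + r)) := by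
    refine aux_card_smul_le hr hdisc (fun y => (h₁ y).1) x ρ htf.toFinset ?_ ?_
    · intro u hu
      simp only [Set.Finite.coe_toFinset] at hu
      exact (hts hu).1
    · intro u hu
      rw [Set.Finite.mem_toFinset] at hu
      exact (hts hu).2
  rw [hcard] at hle
  have h2 : μ (ball x (ρ + r)) ≤ C₂ := (h₂ x).2
  have h3 : C₂ < n • c₁ := by
    rw [nsmul_eq_mul]
    rwa [ENNReal.div_lt_iff (Or.inl hc₁.ne') (Or.inl hc₁top)] at hn
  exact absurd (hle.trans h2) (not_le.mpr h3)

set_option maxHeartbeats 2000000 in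
/-- The Gram matrix `g_{uv} = ∫ φ_u φ_v dμ` of a partition of unity subordinate to an
`(r,R)`-Delone set defines a bounded, positive, invertible operator on `ℓ²(D)`. -/
theorem gram_operator_bounded_positive_invertible {X : Type*} [MetricSpace X]
    [MeasurableSpace X] [BorelSpace X] (μ : Measure X) (hbg : BoundedGeometry μ)
    (D : Set X) (r R : ℝ) (hr : 0 < r) (hR : 0 < R)
    (hdisc : IsDiscreteWith r D) (hdense : IsDenseWith R D)
    (φ : X → X → ℝ) (hmeas : ∀ u ∈ D, Measurable (φ u))
    (hrange : ∀ u ∈ D, ∀ x : X, φ u x ∈ Icc (0 : ℝ) 1)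
    (hsupp : ∀ u ∈ D, ∀ x : X, 2 * R ≤ dist x u → φ u x = 0)
    (hone : ∀ u ∈ D, ∀ x : X, dist x u < r / 6 → φ u x = 1)
    (hsum : ∀ x : X, HasSum (fun u : D => φ u.1 x) 1) :
    ∃ G : lp (fun _ : D => ℂ) 2 →L[ℂ] lp (fun _ : D => ℂ) 2,
      (∀ u v : D, (inner ℂ (lp.single 2 u (1 : ℂ)) (G (lp.single 2 v (1 : ℂ))) : ℂ) =
        ((∫ x, φ u.1 x * φ v.1 x ∂μ : ℝ) : ℂ)) ∧
      G.IsPositive ∧ IsUnit G := by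
  classical
  by_cases hX : Nonempty X
  swap
  · have hD : IsEmpty D := ⟨fun u => hX ⟨u.1⟩⟩
    exact ⟨1, fun u v => (hD.false u).elim, ContinuousLinearMap.isPositive_one, isUnit_one⟩
  obtain ⟨x₀⟩ := hX
  -- countability of D
  have hDcount : D.Countable := by
    have hsub : D ⊆ ⋃ n : ℕ, {u | u ∈ D ∧ dist u x₀ < n + 1} := by
      intro u hu
      obtain ⟨n, hn⟩ := exists_nat_gt (dist u x₀)
      exact mem_iUnion.mpr ⟨n, hu, by linarith⟩
    exact (Set.countable_iUnion fun n : ℕ =>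
      (aux_finite_nbr hbg hr hdisc x₀ ((n : ℝ) + 1) (by positivity)).countable).mono hsub
  haveI : Countable D := hDcount.to_subtype
  obtain ⟨c₁, C₁, hc₁, hC₁, h₁⟩ := hbg (r/3) (by positivity)
  obtain ⟨c₂, C₂, hc₂, hC₂, h₂⟩ := hbg (2*R + r) (by positivity)
  obtain ⟨c₃, C₃, hc₃, hC₃, h₃⟩ := hbg (2*R) (by positivity)
  obtain ⟨c₆, C₆, hc₆, hC₆, h₆⟩ := hbg (r/6) (by positivity)
  have hc₁top : c₁ ≠ ⊤ := fun h => by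
    have := (h₁ x₀).1.trans (h₁ x₀).2
    rw [h] at this
    exact hC₁.ne (top_le_iff.mp this)
  have hc₆top : c₆ ≠ ⊤ := fun h => by
    have := (h₆ x₀).1.trans (h₆ x₀).2
    rw [h] at this
    exact hC₆.ne (top_le_iff.mp this)
  obtain ⟨N, hN⟩ := ENNReal.exists_nat_gt (ENNReal.div_lt_top hC₂.ne hc₁.ne').ne
  have hNc : C₂ < N * c₁ := by
    rwa [ENNReal.div_lt_iff (Or.inl hc₁.ne') (Or.inl hc₁top)] at hN
  -- neighbour sets
  have hSfin : ∀ x : X, {u : D | dist x u.1 < 2*R}.Finite := by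
    intro x
    have h := aux_finite_nbr hbg hr hdisc x (2*R) (by positivity)
    have hsub : {u : D | dist x u.1 < 2*R} ⊆
        (Subtype.val ⁻¹' {u | u ∈ D ∧ dist u x < 2*R}) := by
      intro u hu
      exact ⟨u.2, by rw [dist_comm]; exact hu⟩
    exact ((h.preimage Subtype.val_injective.injOn)).subset hsub
  set Fx : X → Finset D := fun x => (hSfin x).toFinset with hFx_def
  have hFx_mem : ∀ (x : X) (u : D), u ∈ Fx x ↔ dist x u.1 < 2*R := by
    intro x u
    simp [hFx_def, Set.Finite.mem_toFinset]
  have hFxcard : ∀ x, (Fx x).card ≤ N := by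
    intro x
    by_contra hcon
    push_neg at hcon
    have hcard : ((Fx x).image Subtype.val).card = (Fx x).card :=
      Finset.card_image_of_injective _ Subtype.val_injective
    have hle := aux_card_smul_le hr hdisc (fun y => (h₁ y).1) x (2*R)
      ((Fx x).image Subtype.val) ?_ ?_
    · rw [hcard] at hle
      have h4 : ((Fx x).card : ℝ≥0∞) * c₁ ≤ C₂ := by
        have := hle.trans (h₂ x).2
        rwa [nsmul_eq_mul] at this
      have h5 : (N : ℝ≥0∞) * c₁ ≤ ((Fx x).card : ℝ≥0∞) * c₁ :=
        mul_le_mul_left (by exact_mod_cast hcon.le) _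
      exact absurd (h5.trans h4) (not_le.mpr hNc)
    · intro u hu
      simp only [Finset.coe_image, Set.mem_image, Finset.mem_coe] at hu
      obtain ⟨v, _, rfl⟩ := hu
      exact v.2
    · intro u hu
      simp only [Finset.mem_image] at hu
      obtain ⟨v, hv, rfl⟩ := hu
      rw [dist_comm]
      exact (hFx_mem x v).mp hv
  -- the synthesis map
  set f : (D → ℂ) → X → ℂ := fun a x => ∑' u : D, a u * (φ u.1 x : ℂ) with hf_def
  have hφnn : ∀ (u : D) (x : X), 0 ≤ φ u.1 x := fun u x => (hrange u.1 u.2 x).1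
  have hφ1 : ∀ (u : D) (x : X), φ u.1 x ≤ 1 := fun u x => (hrange u.1 u.2 x).2
  have hsupp' : ∀ (a : D → ℂ) (x : X),
      (Function.support fun u : D => a u * (φ u.1 x : ℂ)) ⊆ {u : D | dist x u.1 < 2*R} := by
    intro a x u hu
    rw [Function.mem_support] at hu
    by_contra hcon
    rw [mem_setOf_eq, not_lt] at hcon
    exact hu (by simp [hsupp u.1 u.2 x hcon])
  have hsummable : ∀ (a : D → ℂ) (x : X), Summable fun u : D => a u * (φ u.1 x : ℂ) :=
    fun a x => summable_of_finite_support ((hSfin x).subset (hsupp' a x))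
  have hfsum : ∀ (a : D → ℂ) (x : X), f a x = ∑ u ∈ Fx x, a u * (φ u.1 x : ℂ) := by
    intro a x
    refine tsum_eq_sum ?_
    intro u hu
    by_contra hne
    exact hu ((hFx_mem x u).mpr (hsupp' a x hne))
  have hfmeas : ∀ a : D → ℂ, Measurable (f a) := fun a =>
    aux_measurable_tsum
      (fun u => (Complex.measurable_ofReal.comp (hmeas u.1 u.2)).const_mul (a u))
      (hsummable a)
  -- pointwise bound (real)
  have hptR : ∀ (a : D → ℂ) (x : X), ‖f a x‖^2 ≤ (N : ℝ) * ∑ u ∈ Fx x, ‖a u‖^2 := by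
    intro a x
    have h1 : ‖f a x‖ ≤ ∑ u ∈ Fx x, ‖a u‖ * φ u.1 x := by
      rw [hfsum]
      refine (norm_sum_le _ _).trans (Finset.sum_le_sum fun u _ => ?_)
      rw [norm_mul, Complex.norm_real, Real.norm_eq_abs, abs_of_nonneg (hφnn u x)]
    have h2 : (∑ u ∈ Fx x, ‖a u‖ * φ u.1 x)^2 ≤
        (∑ u ∈ Fx x, ‖a u‖^2) * (∑ u ∈ Fx x, (φ u.1 x)^2) :=
      Finset.sum_mul_sq_le_sq_mul_sq _ _ _
    have h3 : (∑ u ∈ Fx x, (φ u.1 x)^2) ≤ (N : ℝ) := by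
      calc (∑ u ∈ Fx x, (φ u.1 x)^2) ≤ ∑ u ∈ Fx x, 1 := by
            refine Finset.sum_le_sum fun u _ => ?_
            nlinarith [hφnn u x, hφ1 u x]
        _ = ((Fx x).card : ℝ) := by simp
        _ ≤ (N : ℝ) := by exact_mod_cast hFxcard x
    have hnn : (0:ℝ) ≤ ∑ u ∈ Fx x, ‖a u‖^2 :=
      Finset.sum_nonneg fun u _ => sq_nonneg _
    calc ‖f a x‖^2 ≤ (∑ u ∈ Fx x, ‖a u‖ * φ u.1 x)^2 := by
          refine pow_le_pow_left₀ (norm_nonneg _) h1 2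
      _ ≤ (∑ u ∈ Fx x, ‖a u‖^2) * (∑ u ∈ Fx x, (φ u.1 x)^2) := h2
      _ ≤ (∑ u ∈ Fx x, ‖a u‖^2) * (N : ℝ) := by
          exact mul_le_mul_of_nonneg_left h3 hnn
      _ = (N : ℝ) * ∑ u ∈ Fx x, ‖a u‖^2 := mul_comm _ _
  -- pointwise bound (ENNReal)
  have hptE : ∀ (a : D → ℂ) (x : X), (‖f a x‖₊ : ℝ≥0∞)^2 ≤
      (N : ℝ≥0∞) * ∑' u : D, (‖a u‖₊ : ℝ≥0∞)^2 *
        (ball (u.1 : X) (2*R)).indicator (fun _ => (1:ℝ≥0∞)) x := by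
    intro a x
    calc (‖f a x‖₊ : ℝ≥0∞)^2 = ENNReal.ofReal (‖f a x‖^2) := by
          rw [← enorm_eq_nnnorm, ← ofReal_norm, ← ENNReal.ofReal_pow (norm_nonneg _)]
      _ ≤ ENNReal.ofReal ((N : ℝ) * ∑ u ∈ Fx x, ‖a u‖^2) :=
          ENNReal.ofReal_le_ofReal (hptR a x)
      _ = (N : ℝ≥0∞) * ∑ u ∈ Fx x, (‖a u‖₊ : ℝ≥0∞)^2 := by
          rw [ENNReal.ofReal_mul (by positivity),
            ENNReal.ofReal_sum_of_nonneg (fun u _ => by positivity), ENNReal.ofReal_natCast]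
          congr 1
          refine Finset.sum_congr rfl fun u _ => ?_
          rw [← enorm_eq_nnnorm, ← ofReal_norm, ← ENNReal.ofReal_pow (norm_nonneg _)]
      _ ≤ _ := by
          refine mul_le_mul_right ?_ _
          have heq : ∀ u ∈ Fx x, (‖a u‖₊ : ℝ≥0∞)^2 = (‖a u‖₊ : ℝ≥0∞)^2 *
              (ball (u.1 : X) (2*R)).indicator (fun _ => (1:ℝ≥0∞)) x := by
            intro u hu
            rw [Set.indicator_of_mem (by rw [mem_ball]; exact (hFx_mem x u).mp hu), mul_one]
          rw [Finset.sum_congr rfl heq]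
          exact ENNReal.sum_le_tsum _
  -- upper integral bound
  have hmeasg : ∀ (a : D → ℂ) (u : D), Measurable fun x : X => (‖a u‖₊ : ℝ≥0∞)^2 *
      (ball (u.1 : X) (2*R)).indicator (fun _ => (1:ℝ≥0∞)) x :=
    fun a u => (measurable_const.indicator measurableSet_ball).const_mul _
  have hupper : ∀ a : D → ℂ, ∫⁻ x, (‖f a x‖₊ : ℝ≥0∞)^2 ∂μ ≤
      ((N : ℝ≥0∞) * C₃) * ∑' u : D, (‖a u‖₊ : ℝ≥0∞)^2 := by
    intro a
    calc ∫⁻ x, (‖f a x‖₊ : ℝ≥0∞)^2 ∂μ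
        ≤ ∫⁻ x, (N : ℝ≥0∞) * ∑' u : D, (‖a u‖₊ : ℝ≥0∞)^2 *
            (ball (u.1 : X) (2*R)).indicator (fun _ => (1:ℝ≥0∞)) x ∂μ :=
          lintegral_mono (hptE a)
      _ = (N : ℝ≥0∞) * ∫⁻ x, ∑' u : D, (‖a u‖₊ : ℝ≥0∞)^2 *
            (ball (u.1 : X) (2*R)).indicator (fun _ => (1:ℝ≥0∞)) x ∂μ :=
          lintegral_const_mul' _ _ (ENNReal.natCast_ne_top N)
      _ = (N : ℝ≥0∞) * ∑' u : D, ∫⁻ x, (‖a u‖₊ : ℝ≥0∞)^2 *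
            (ball (u.1 : X) (2*R)).indicator (fun _ => (1:ℝ≥0∞)) x ∂μ := by
          rw [lintegral_tsum fun u => (hmeasg a u).aemeasurable]
      _ = (N : ℝ≥0∞) * ∑' u : D, (‖a u‖₊ : ℝ≥0∞)^2 * μ (ball (u.1 : X) (2*R)) := by
          congr 1
          refine tsum_congr fun u => ?_
          rw [lintegral_const_mul' _ _ (by simp),
            lintegral_indicator measurableSet_ball _, setLIntegral_one]
      _ ≤ (N : ℝ≥0∞) * ∑' u : D, (‖a u‖₊ : ℝ≥0∞)^2 * C₃ := by
          refine mul_le_mul_right (ENNReal.tsum_le_tsum fun u => ?_) _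
          exact mul_le_mul_right (h₃ _).2 _
      _ = ((N : ℝ≥0∞) * C₃) * ∑' u : D, (‖a u‖₊ : ℝ≥0∞)^2 := by
          rw [ENNReal.tsum_mul_right, mul_comm ((∑' u : D, (‖a u‖₊ : ℝ≥0∞)^2)) C₃, ← mul_assoc]
  -- relating the ℓ² norm and the tsum
  have htsum_norm : ∀ ξ : lp (fun _ : D => ℂ) 2,
      ∑' u : D, (‖ξ u‖₊ : ℝ≥0∞)^2 = ENNReal.ofReal (‖ξ‖^2) := by
    intro ξ
    have hp : (0:ℝ) < (2:ℝ≥0∞).toReal := by simp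
    have h1 := lp.norm_rpow_eq_tsum hp ξ
    have hsumm := (lp.memℓp ξ).summable hp
    have h22 : (2:ℝ≥0∞).toReal = (2:ℝ) := by simp
    rw [h22] at h1 hsumm
    have hpow : ∀ y : ℝ, 0 ≤ y → y ^ (2:ℝ) = y^2 := fun y hy => by
      rw [show (2:ℝ) = ((2:ℕ):ℝ) by norm_num, Real.rpow_natCast]
    have h1' : ‖ξ‖^2 = ∑' u : D, ‖ξ u‖^2 := by
      rw [← hpow _ (norm_nonneg ξ), h1]
      exact tsum_congr fun u => hpow _ (norm_nonneg _)
    have hsumm' : Summable fun u : D => ‖ξ u‖^2 := by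
      refine hsumm.congr fun u => hpow _ (norm_nonneg _)
    rw [h1', ENNReal.ofReal_tsum_of_nonneg (fun u => sq_nonneg _) hsumm']
    exact tsum_congr fun u => by
      rw [← enorm_eq_nnnorm, ← ofReal_norm, ← ENNReal.ofReal_pow (norm_nonneg _)]
  -- membership in L²
  have hlint : ∀ ξ : lp (fun _ : D => ℂ) 2,
      ∫⁻ x, (‖f (⇑ξ) x‖₊ : ℝ≥0∞)^2 ∂μ ≤ ((N : ℝ≥0∞) * C₃) * ENNReal.ofReal (‖ξ‖^2) := by
    intro ξ
    have := hupper (⇑ξ)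
    rwa [htsum_norm ξ] at this
  have hNC₃top : ((N : ℝ≥0∞) * C₃) ≠ ⊤ := ENNReal.mul_ne_top (ENNReal.natCast_ne_top N) hC₃.ne
  have h2toReal : (2:ℝ≥0∞).toReal = (2:ℝ) := by simp
  have hlintpow : ∀ g : X → ℂ, (∫⁻ x, (‖g x‖₊ : ℝ≥0∞) ^ (2:ℝ≥0∞).toReal ∂μ)
      = ∫⁻ x, (‖g x‖₊ : ℝ≥0∞)^2 ∂μ := by
    intro g
    refine lintegral_congr fun x => ?_
    rw [h2toReal, show ((2:ℝ) = ((2:ℕ):ℝ)) by norm_num, ENNReal.rpow_natCast]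
  have hmem : ∀ ξ : lp (fun _ : D => ℂ) 2, MemLp (f (⇑ξ)) 2 μ := by
    intro ξ
    refine ⟨(hfmeas (⇑ξ)).aestronglyMeasurable, ?_⟩
    rw [eLpNorm_eq_lintegral_rpow_enorm_toReal two_ne_zero ENNReal.ofNat_ne_top]
    simp only [enorm_eq_nnnorm]
    refine ENNReal.rpow_lt_top_of_nonneg (by positivity) ?_
    rw [hlintpow]
    exact ((hlint ξ).trans_lt (ENNReal.mul_lt_top hNC₃top.lt_top ENNReal.ofReal_lt_top)).ne
  -- linearity of f
  have hadd : ∀ ξ η : lp (fun _ : D => ℂ) 2, f (⇑(ξ + η)) = f (⇑ξ) + f (⇑η) := by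
    intro ξ η
    funext x
    have hc : ⇑(ξ + η) = ⇑ξ + ⇑η := lp.coeFn_add ξ η
    simp only [hf_def, hc, Pi.add_apply]
    rw [show (fun u : D => (ξ u + η u) * (φ u.1 x : ℂ)) =
        (fun u : D => ξ u * (φ u.1 x : ℂ) + η u * (φ u.1 x : ℂ)) from
      funext fun u => add_mul _ _ _]
    exact Summable.tsum_add (hsummable (⇑ξ) x) (hsummable (⇑η) x)
  have hsmul : ∀ (z : ℂ) (ξ : lp (fun _ : D => ℂ) 2), f (⇑(z • ξ)) = z • f (⇑ξ) := by
    intro z ξ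
    funext x
    have hc : ⇑(z • ξ) = z • ⇑ξ := lp.coeFn_smul z ξ
    simp only [hf_def, hc, Pi.smul_apply, smul_eq_mul]
    rw [show (fun u : D => z * ξ u * (φ u.1 x : ℂ)) =
        (fun u : D => z * (ξ u * (φ u.1 x : ℂ))) from funext fun u => mul_assoc _ _ _]
    exact tsum_mul_left
  -- the operator T
  set T₀ : lp (fun _ : D => ℂ) 2 →ₗ[ℂ] Lp ℂ 2 μ :=
    { toFun := fun ξ => (hmem ξ).toLp (f (⇑ξ))
      map_add' := fun ξ η =>
        (MemLp.toLp_congr (hmem (ξ + η)) ((hmem ξ).add (hmem η)) (Filter.EventuallyEq.of_eq (hadd ξ η))).trans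
          (MemLp.toLp_add _ _)
      map_smul' := fun z ξ =>
        (MemLp.toLp_congr (hmem (z • ξ)) ((hmem ξ).const_smul z) (Filter.EventuallyEq.of_eq (hsmul z ξ))).trans
          (MemLp.toLp_const_smul z (hmem ξ)) } with hT₀_def
  set K : ℝ := (((N : ℝ≥0∞) * C₃) ^ (1/2 : ℝ)).toReal with hK_def
  have hTbound : ∀ ξ : lp (fun _ : D => ℂ) 2, ‖T₀ ξ‖ ≤ K * ‖ξ‖ := by
    intro ξ
    have h0 : ‖T₀ ξ‖ = (eLpNorm (f (⇑ξ)) 2 μ).toReal := Lp.norm_toLp _ (hmem ξ)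
    have h1 : eLpNorm (f (⇑ξ)) 2 μ ≤
        ((N : ℝ≥0∞) * C₃) ^ (1/2:ℝ) * ENNReal.ofReal ‖ξ‖ := by
      rw [eLpNorm_eq_lintegral_rpow_enorm_toReal two_ne_zero ENNReal.ofNat_ne_top]
      simp only [enorm_eq_nnnorm]
      rw [hlintpow, h2toReal]
      calc (∫⁻ x, (‖f (⇑ξ) x‖₊ : ℝ≥0∞)^2 ∂μ) ^ (1/(2:ℝ))
          ≤ (((N : ℝ≥0∞) * C₃) * ENNReal.ofReal (‖ξ‖^2)) ^ (1/(2:ℝ)) :=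
            ENNReal.rpow_le_rpow (hlint ξ) (by norm_num)
        _ = ((N : ℝ≥0∞) * C₃) ^ (1/2:ℝ) * (ENNReal.ofReal (‖ξ‖^2)) ^ (1/2:ℝ) :=
            ENNReal.mul_rpow_of_nonneg _ _ (by norm_num)
        _ = ((N : ℝ≥0∞) * C₃) ^ (1/2:ℝ) * ENNReal.ofReal ‖ξ‖ := by
            congr 1
            rw [ENNReal.ofReal_rpow_of_nonneg (by positivity) (by norm_num)]
            congr 1
            rw [show ‖ξ‖^2 = ‖ξ‖^(2:ℝ) by
              rw [show (2:ℝ) = ((2:ℕ):ℝ) by norm_num, Real.rpow_natCast],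
              ← Real.rpow_mul (norm_nonneg _), show (2:ℝ)*(1/2) = 1 by norm_num,
              Real.rpow_one]
    rw [h0]
    calc (eLpNorm (f (⇑ξ)) 2 μ).toReal
        ≤ (((N : ℝ≥0∞) * C₃) ^ (1/2:ℝ) * ENNReal.ofReal ‖ξ‖).toReal :=
          ENNReal.toReal_mono (ENNReal.mul_ne_top
            (ENNReal.rpow_ne_top_of_nonneg (by norm_num) hNC₃top) ENNReal.ofReal_ne_top) h1
      _ = K * ‖ξ‖ := by
          rw [ENNReal.toReal_mul, ENNReal.toReal_ofReal (norm_nonneg _), hK_def]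
  set T : lp (fun _ : D => ℂ) 2 →L[ℂ] Lp ℂ 2 μ := T₀.mkContinuous K hTbound with hT_def
  have hTapp : ∀ ξ, T ξ = (hmem ξ).toLp (f (⇑ξ)) := fun ξ => rfl
  -- value of f on small balls
  have hone' : ∀ (u : D) (x : X), x ∈ ball (u.1 : X) (r/6) → ∀ w : D, w ≠ u → φ w.1 x = 0 := by
    intro u x hx w hw
    have h1 : φ u.1 x = 1 := hone u.1 u.2 x (mem_ball.mp hx)
    have h2 := sum_le_hasSum {w, u} (fun v _ => hφnn v x) (hsum x)
    rw [Finset.sum_pair hw, h1] at h2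
    have h3 := hφnn w x
    linarith
  have hfval : ∀ (a : D → ℂ) (u : D) (x : X), x ∈ ball (u.1 : X) (r/6) → f a x = a u := by
    intro a u x hx
    have h0 : f a x = a u * (φ u.1 x : ℂ) :=
      tsum_eq_single u fun w hw => by rw [hone' u x hx w hw, Complex.ofReal_zero, mul_zero]
    rw [h0, hone u.1 u.2 x (mem_ball.mp hx), Complex.ofReal_one, mul_one]
  -- lower integral bound
  have hlower : ∀ ξ : lp (fun _ : D => ℂ) 2,
      c₆ * ENNReal.ofReal (‖ξ‖^2) ≤ ∫⁻ x, (‖f (⇑ξ) x‖₊ : ℝ≥0∞)^2 ∂μ := by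
    intro ξ
    have hdisj6 : ∀ u w : D, w ≠ u → Disjoint (ball (w.1 : X) (r/6)) (ball (u.1 : X) (r/6)) := by
      intro u w hwu
      refine ball_disjoint_ball ?_
      have := hdisc w.1 w.2 u.1 u.2 (fun h => hwu (Subtype.ext h))
      linarith
    have hpt : ∀ x : X, ∑' u : D, (‖ξ u‖₊ : ℝ≥0∞)^2 *
        (ball (u.1 : X) (r/6)).indicator (fun _ => (1:ℝ≥0∞)) x ≤ (‖f (⇑ξ) x‖₊ : ℝ≥0∞)^2 := by
      intro x
      by_cases hex : ∃ u : D, x ∈ ball (u.1 : X) (r/6)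
      · obtain ⟨u, hu⟩ := hex
        have heq : ∀ w : D, w ≠ u → (‖ξ w‖₊ : ℝ≥0∞)^2 *
            (ball (w.1 : X) (r/6)).indicator (fun _ => (1:ℝ≥0∞)) x = 0 := by
          intro w hw
          rw [Set.indicator_of_notMem (fun hx => Set.disjoint_left.mp (hdisj6 u w hw) hx hu),
            mul_zero]
        rw [tsum_eq_single u heq, Set.indicator_of_mem hu, mul_one, hfval (⇑ξ) u x hu]
      · push_neg at hex
        have heq : ∀ u : D, (‖ξ u‖₊ : ℝ≥0∞)^2 *
            (ball (u.1 : X) (r/6)).indicator (fun _ => (1:ℝ≥0∞)) x = 0 := by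
          intro u
          rw [Set.indicator_of_notMem (hex u), mul_zero]
        rw [tsum_congr heq, tsum_zero]
        exact zero_le
    have hmeasg6 : ∀ u : D, Measurable fun x : X => (‖ξ u‖₊ : ℝ≥0∞)^2 *
        (ball (u.1 : X) (r/6)).indicator (fun _ => (1:ℝ≥0∞)) x :=
      fun u => (measurable_const.indicator measurableSet_ball).const_mul _
    calc c₆ * ENNReal.ofReal (‖ξ‖^2) = c₆ * ∑' u : D, (‖ξ u‖₊ : ℝ≥0∞)^2 := by
          rw [htsum_norm]
      _ = ∑' u : D, (‖ξ u‖₊ : ℝ≥0∞)^2 * c₆ := by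
          rw [ENNReal.tsum_mul_right, mul_comm]
      _ ≤ ∑' u : D, (‖ξ u‖₊ : ℝ≥0∞)^2 * μ (ball (u.1 : X) (r/6)) :=
          ENNReal.tsum_le_tsum fun u => mul_le_mul_right (h₆ _).1 _
      _ = ∑' u : D, ∫⁻ x, (‖ξ u‖₊ : ℝ≥0∞)^2 *
            (ball (u.1 : X) (r/6)).indicator (fun _ => (1:ℝ≥0∞)) x ∂μ := by
          refine tsum_congr fun u => ?_
          rw [lintegral_const_mul' _ _ (by simp),
            lintegral_indicator measurableSet_ball _, setLIntegral_one]
      _ = ∫⁻ x, ∑' u : D, (‖ξ u‖₊ : ℝ≥0∞)^2 *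
            (ball (u.1 : X) (r/6)).indicator (fun _ => (1:ℝ≥0∞)) x ∂μ :=
          (lintegral_tsum fun u => (hmeasg6 u).aemeasurable).symm
      _ ≤ ∫⁻ x, (‖f (⇑ξ) x‖₊ : ℝ≥0∞)^2 ∂μ := lintegral_mono hpt
  -- lower bound on ‖T ξ‖
  set κ : ℝ := (c₆ ^ (1/2:ℝ)).toReal with hκ_def
  have hκpos : 0 < κ := by
    rw [hκ_def]
    refine ENNReal.toReal_pos ?_ ?_
    · exact (ENNReal.rpow_pos hc₆ hc₆top).ne'
    · exact ENNReal.rpow_ne_top_of_nonneg (by norm_num) hc₆top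
  have hTge : ∀ ξ : lp (fun _ : D => ℂ) 2, κ * ‖ξ‖ ≤ ‖T ξ‖ := by
    intro ξ
    have h0 : ‖T ξ‖ = (eLpNorm (f (⇑ξ)) 2 μ).toReal := Lp.norm_toLp _ (hmem ξ)
    have h1 : c₆ ^ (1/2:ℝ) * ENNReal.ofReal ‖ξ‖ ≤ eLpNorm (f (⇑ξ)) 2 μ := by
      rw [eLpNorm_eq_lintegral_rpow_enorm_toReal two_ne_zero ENNReal.ofNat_ne_top]
      simp only [enorm_eq_nnnorm]
      rw [hlintpow, h2toReal]
      calc c₆ ^ (1/2:ℝ) * ENNReal.ofReal ‖ξ‖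
          = (c₆ * ENNReal.ofReal (‖ξ‖^2)) ^ (1/(2:ℝ)) := by
            rw [ENNReal.mul_rpow_of_nonneg _ _ (by norm_num)]
            congr 1
            rw [ENNReal.ofReal_rpow_of_nonneg (by positivity) (by norm_num)]
            congr 1
            rw [show ‖ξ‖^2 = ‖ξ‖^(2:ℝ) by
              rw [show (2:ℝ) = ((2:ℕ):ℝ) by norm_num, Real.rpow_natCast],
              ← Real.rpow_mul (norm_nonneg _), show (2:ℝ)*(1/2) = 1 by norm_num,
              Real.rpow_one]
        _ ≤ (∫⁻ x, (‖f (⇑ξ) x‖₊ : ℝ≥0∞)^2 ∂μ) ^ (1/(2:ℝ)) :=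
            ENNReal.rpow_le_rpow (hlower ξ) (by norm_num)
    rw [h0]
    have h2 := ENNReal.toReal_mono (hmem ξ).2.ne h1
    rwa [ENNReal.toReal_mul, ENNReal.toReal_ofReal (norm_nonneg _)] at h2
  -- the Gram operator
  set G : lp (fun _ : D => ℂ) 2 →L[ℂ] lp (fun _ : D => ℂ) 2 :=
    ContinuousLinearMap.adjoint T ∘L T with hG_def
  have hGinner : ∀ ξ η : lp (fun _ : D => ℂ) 2,
      (inner ℂ ξ (G η) : ℂ) = inner ℂ (T ξ) (T η) := by
    intro ξ η
    rw [hG_def, ContinuousLinearMap.comp_apply, ContinuousLinearMap.adjoint_inner_right]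
  have hfdelta : ∀ (u : D) (x : X), f (⇑(lp.single 2 u (1:ℂ))) x = (φ u.1 x : ℂ) := by
    intro u x
    have h0 : f (⇑(lp.single 2 u (1:ℂ))) x = (lp.single 2 u (1:ℂ) : ∀ _ : D, ℂ) u * (φ u.1 x : ℂ) :=
      tsum_eq_single u fun w hw => by
        rw [lp.single_apply_ne 2 u _ hw, zero_mul]
    rw [h0, lp.single_apply_self, one_mul]
  refine ⟨G, ?_, ?_, ?_⟩
  · -- inner products
    intro u v
    rw [hGinner, MeasureTheory.L2.inner_def]
    have h1 : ∫ x, (inner ℂ ((T (lp.single 2 u (1:ℂ))) x) ((T (lp.single 2 v (1:ℂ))) x) : ℂ) ∂μ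
        = ∫ x, ((φ u.1 x * φ v.1 x : ℝ) : ℂ) ∂μ := by
      refine integral_congr_ae ?_
      filter_upwards [MemLp.coeFn_toLp (hmem (lp.single 2 u (1:ℂ))),
        MemLp.coeFn_toLp (hmem (lp.single 2 v (1:ℂ)))] with x hx1 hx2
      rw [hTapp, hTapp] at *
      rw [hx1, hx2, hfdelta u x, hfdelta v x, RCLike.inner_apply, Complex.conj_ofReal,
        ← Complex.ofReal_mul, mul_comm]
    rw [h1]
    exact integral_ofReal (𝕜 := ℂ) (f := fun x => φ u.1 x * φ v.1 x)
  · -- positivity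
    have hpos := ContinuousLinearMap.IsPositive.adjoint_conj
      (ContinuousLinearMap.isPositive_one (𝕜 := ℂ) (E := Lp ℂ 2 μ)) T
    rw [ContinuousLinearMap.one_def, ContinuousLinearMap.id_comp] at hpos
    rwa [← hG_def] at hpos
  · -- invertibility
    have hGlow : ∀ ξ : lp (fun _ : D => ℂ) 2, κ^2 * ‖ξ‖^2 ≤ RCLike.re (inner ℂ (G ξ) ξ : ℂ) := by
      intro ξ
      have h1 : ‖T ξ‖^2 = RCLike.re (inner ℂ (G ξ) ξ : ℂ) := by
        rw [hG_def]
        exact ContinuousLinearMap.apply_norm_sq_eq_inner_adjoint_left T ξ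
      rw [← h1]
      calc κ^2 * ‖ξ‖^2 = (κ * ‖ξ‖)^2 := (mul_pow _ _ _).symm
        _ ≤ ‖T ξ‖^2 := by
            refine pow_le_pow_left₀ (by positivity) (hTge ξ) 2
    have hGnorm : ∀ ξ : lp (fun _ : D => ℂ) 2, κ^2 * ‖ξ‖ ≤ ‖G ξ‖ := by
      intro ξ
      rcases eq_or_ne ξ 0 with rfl | hne
      · simp
      · have h1 := hGlow ξ
        have h2 : RCLike.re (inner ℂ (G ξ) ξ : ℂ) ≤ ‖G ξ‖ * ‖ξ‖ := by
          calc RCLike.re (inner ℂ (G ξ) ξ : ℂ) ≤ ‖(inner ℂ (G ξ) ξ : ℂ)‖ := RCLike.re_le_norm _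
            _ ≤ ‖G ξ‖ * ‖ξ‖ := norm_inner_le_norm _ _
        have h3 : (0:ℝ) < ‖ξ‖ := norm_pos_iff.mpr hne
        have h4 : κ^2 * ‖ξ‖ * ‖ξ‖ ≤ ‖G ξ‖ * ‖ξ‖ := by
          calc κ^2 * ‖ξ‖ * ‖ξ‖ = κ^2 * ‖ξ‖^2 := by ring
            _ ≤ RCLike.re (inner ℂ (G ξ) ξ : ℂ) := h1
            _ ≤ ‖G ξ‖ * ‖ξ‖ := h2
        exact le_of_mul_le_mul_right h4 h3
    have hκ2pos : (0:ℝ) < κ^2 := by positivity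
    have hanti : AntilipschitzWith ⟨(κ^2)⁻¹, by positivity⟩ G := by
      refine G.antilipschitz_of_bound fun ξ => ?_
      change ‖ξ‖ ≤ (κ^2)⁻¹ * ‖G ξ‖
      rw [inv_mul_eq_div, le_div_iff₀ hκ2pos]
      calc ‖ξ‖ * κ^2 = κ^2 * ‖ξ‖ := mul_comm _ _
        _ ≤ ‖G ξ‖ := hGnorm ξ
    rw [ContinuousLinearMap.isUnit_iff_bijective]
    refine ⟨hanti.injective, ?_⟩
    have hclosed : IsClosed (LinearMap.range G.toLinearMap : Set (lp (fun _ : D => ℂ) 2)) :=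
      hanti.isClosed_range G.uniformContinuous
    haveI : CompleteSpace (LinearMap.range G.toLinearMap) := hclosed.completeSpace_coe
    have hrange : LinearMap.range G.toLinearMap = ⊤ := by
      apply Submodule.orthogonal_eq_bot_iff.mp
      rw [Submodule.eq_bot_iff]
      intro y hy
      have h0 : (inner ℂ (G y) y : ℂ) = 0 :=
        (Submodule.mem_orthogonal _ y).mp hy (G y) (LinearMap.mem_range_self _ y)
      have h1 := hGlow y
      rw [h0] at h1
      simp only [map_zero] at h1
      have h2 : ‖y‖^2 ≤ 0 := by nlinarith
      have h3 : ‖y‖ = 0 := by nlinarith [sq_nonneg ‖y‖, norm_nonneg y]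
      exact norm_eq_zero.mp h3
    exact LinearMap.range_eq_top.mp hrange
end

section
/- Let (X,d,μ) be a proper metric measure space of bounded geometry. For each n ∈ ℕ let D_n ⊆ X be an (r_n, R_n)-Delone set with lim_{n→∞} R_n = 0, and let {φ^n_u}_{u∈D_n} be a family of Borel measurable functions φ^n_u : X → [0,1] such that φ^n_u(x) = 0 whenever d(x,u) ≥ 2R_n and Σ_{u∈D_n} φ^n_u(x) = 1 for all x ∈ X. Let P_n denote the orthogonal projection of L²(X,μ) onto the closure of the linear span of {φ^n_u : u ∈ D_n}. Then P_n converges strongly to the identity operator: for every f ∈ L²(X,μ), ‖P_n f - f‖_{L²} → 0 as n → ∞. -/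
open Metric Set MeasureTheory Filter ENNReal

/-- An `s`-discrete set intersected with a compact set is finite. -/
lemma finite_discrete_inter_compact {X : Type*} [MetricSpace X] {s : ℝ} (hs : 0 < s)
    {D : Set X} (hD : IsDiscreteWith s D) {S : Set X} (hS : IsCompact S) :
    (D ∩ S).Finite := by
  by_contra h
  have hinf : (D ∩ S).Infinite := h
  set e := hinf.natEmbedding with he
  set y : ℕ → X := fun n => (e n).1 with hy
  have hymem : ∀ n, y n ∈ S := fun n => (e n).2.2
  have hyD : ∀ n, y n ∈ D := fun n => (e n).2.1
  obtain ⟨a, _, ψ, hψ, hconv⟩ := hS.tendsto_subseq hymem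
  have hc : CauchySeq (y ∘ ψ) := hconv.cauchySeq
  rw [Metric.cauchySeq_iff] at hc
  obtain ⟨N, hN⟩ := hc s hs
  have hne : y (ψ N) ≠ y (ψ (N + 1)) := by
    intro hEq
    have : e (ψ N) = e (ψ (N + 1)) := Subtype.ext hEq
    have := e.injective this
    exact absurd this (hψ (by omega)).ne
  have := hD _ (hyD (ψ N)) _ (hyD (ψ (N+1))) hne
  have h2 := hN N le_rfl (N+1) (by omega)
  simp only [Function.comp] at h2
  linarith

/-- distance to a member of a closed subspace bounds the distance to the projection. -/
lemma proj_dist_le {E : Type*} [NormedAddCommGroup E] [InnerProductSpace ℂ E]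
    (K : Submodule ℂ E) (g p h : E) (hp : p ∈ K) (hperp : g - p ∈ Kᗮ) (hh : h ∈ K) :
    ‖p - g‖ ≤ ‖g - h‖ := by
  have h2 : p - h ∈ K := Submodule.sub_mem _ hp hh
  have horth : (inner ℂ (g - p) (p - h) : ℂ) = 0 := by
    rw [← inner_conj_symm]
    rw [hperp _ h2, map_zero]
  have hsq : ‖g - h‖ ^ 2 = ‖g - p‖ ^ 2 + ‖p - h‖ ^ 2 := by
    have := norm_add_sq_eq_norm_sq_add_norm_sq_of_inner_eq_zero _ _ horth
    rw [sub_add_sub_cancel] at this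
    simpa [pow_two] using this
  rw [norm_sub_rev p g]
  have h1 : ‖g - p‖ ^ 2 ≤ ‖g - h‖ ^ 2 := by nlinarith [sq_nonneg ‖p - h‖]
  exact (pow_le_pow_iff_left₀ (norm_nonneg _) (norm_nonneg _) (by norm_num)).mp h1

/-- `eLpNorm` bound for a function bounded by `c` and supported in `S`. -/
lemma eLpNorm_le_of_bound_support {X : Type*} [MeasurableSpace X] (μ : Measure X)
    {f : X → ℂ} {S : Set X} {c : ℝ}
    (hb : ∀ x, ‖f x‖ ≤ c) (h0 : ∀ x ∉ S, f x = 0) :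
    eLpNorm f 2 μ ≤ ‖c‖₊ * μ S ^ (1 / (2:ℝ≥0∞).toReal) := by
  refine (eLpNorm_mono fun x => ?_).trans (eLpNorm_indicator_const_le (c : ℝ) 2)
  by_cases hx : x ∈ S
  · rw [Set.indicator_of_mem hx]
    exact (hb x).trans (le_abs_self c)
  · simp [h0 x hx, Set.indicator_of_notMem hx]

/-- The orthogonal projections onto the spans of the partitions of unity subordinate to
Delone sets `D_n` with `R(D_n) → 0` converge strongly to the identity on `L²(X,μ)`. -/
theorem projections_tendsto_id {X : Type*} [MetricSpace X] [ProperSpace X]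
    [MeasurableSpace X] [BorelSpace X] (μ : Measure X) (hbg : BoundedGeometry μ)
    (D : ℕ → Set X) (r R : ℕ → ℝ) (hr : ∀ n, 0 < r n)
    (hdisc : ∀ n, IsDiscreteWith (r n) (D n))
    (hdense : ∀ n, IsDenseWith (R n) (D n))
    (hR0 : Tendsto R atTop (nhds 0))
    (φ : ℕ → X → X → ℝ)
    (hmeas : ∀ n, ∀ u ∈ D n, Measurable (φ n u))
    (hrange : ∀ n, ∀ u ∈ D n, ∀ x : X, φ n u x ∈ Icc (0 : ℝ) 1)
    (hsupp : ∀ n, ∀ u ∈ D n, ∀ x : X, 2 * R n ≤ dist x u → φ n u x = 0)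
    (hsum : ∀ n, ∀ x : X, HasSum (fun u : D n => φ n u.1 x) 1)
    (K : ℕ → Submodule ℂ (Lp ℂ 2 μ))
    (hK : ∀ n, K n = (Submodule.span ℂ
      {g : Lp ℂ 2 μ | ∃ u ∈ D n, (g : X → ℂ) =ᵐ[μ] fun x => (φ n u x : ℂ)}).topologicalClosure)
    (P : ℕ → Lp ℂ 2 μ →L[ℂ] Lp ℂ 2 μ)
    (hP : ∀ n, ∀ f : Lp ℂ 2 μ, P n f ∈ K n ∧ f - P n f ∈ (K n)ᗮ) :
    ∀ f : Lp ℂ 2 μ, Tendsto (fun n => ‖P n f - f‖) atTop (nhds 0) := by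
  classical
  have hfc : IsFiniteMeasureOnCompacts μ := by
    obtain ⟨c, C, hc, hC, hball⟩ := hbg 1 one_pos
    constructor
    intro Kc hKc
    obtain ⟨t, ht⟩ := hKc.elim_finite_subcover (fun x : X => ball x 1)
      (fun x => isOpen_ball) (fun x _ => mem_iUnion.2 ⟨x, mem_ball_self one_pos⟩)
    calc μ Kc ≤ ∑ x ∈ t, μ (ball x 1) := (measure_mono ht).trans (measure_biUnion_finset_le _ _)
      _ ≤ ∑ _x ∈ t, C := Finset.sum_le_sum fun x _ => (hball x).2
      _ < ⊤ := ENNReal.sum_lt_top.2 fun _ _ => hC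
  have projle : ∀ n (g h : Lp ℂ 2 μ), h ∈ K n → ‖P n g - g‖ ≤ ‖g - h‖ :=
    fun n g h hh => proj_dist_le (K n) g (P n g) h (hP n g).1 (hP n g).2 hh
  intro f
  rw [NormedAddCommGroup.tendsto_nhds_zero]
  intro ε hε
  have hf2 : MemLp (f : X → ℂ) 2 μ := Lp.memLp f
  obtain ⟨g, hgsupp, hgnorm, hgcont, hgmem⟩ :=
    hf2.exists_hasCompactSupport_eLpNorm_sub_le (by norm_num : (2:ℝ≥0∞) ≠ ∞)
      (ε := ENNReal.ofReal (ε/3)) (ne_of_gt (ENNReal.ofReal_pos.2 (by positivity)))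
  set gL : Lp ℂ 2 μ := hgmem.toLp g with hgLdef
  have hfgL : ‖f - gL‖ ≤ ε / 3 := by
    rw [Lp.norm_def]
    have hco : (⇑(f - gL) : X → ℂ) =ᵐ[μ] (⇑f - g) := by
      filter_upwards [Lp.coeFn_sub f gL, hgmem.coeFn_toLp] with x h1 h2
      rw [h1, Pi.sub_apply, hgLdef, h2, Pi.sub_apply]
    rw [eLpNorm_congr_ae hco]
    exact ENNReal.toReal_le_of_le_ofReal (by positivity) hgnorm
  have main : ∀ᶠ n in atTop, ∃ h ∈ K n, ‖gL - h‖ ≤ ε / 3 := by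
    by_cases hT : tsupport g = ∅
    · refine Eventually.of_forall fun n => ⟨0, Submodule.zero_mem _, ?_⟩
      have hg0 : g = fun _ => (0 : ℂ) :=
        funext fun x => image_eq_zero_of_notMem_tsupport (by simp [hT])
      rw [sub_zero, Lp.norm_def, eLpNorm_congr_ae hgmem.coeFn_toLp, hg0]
      simp only [eLpNorm_zero']
      positivity
    · obtain ⟨x₀, hx₀⟩ := Set.nonempty_iff_ne_empty.2 hT
      have hRnn : ∀ m, 0 ≤ R m := fun m => by
        obtain ⟨y, _, hy⟩ := hdense m x₀
        exact dist_nonneg.trans hy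
      have hTc : IsCompact (tsupport g) := hgsupp
      set S : Set X := cthickening 2 (tsupport g) with hSdef
      have hμS : μ S < ∞ := hTc.cthickening.measure_lt_top
      set M : ℝ := (μ S).toReal ^ ((1:ℝ)/2) with hMdef
      have hMnn : 0 ≤ M := Real.rpow_nonneg ENNReal.toReal_nonneg _
      set ε₀ : ℝ := (ε/3) / (M + 1) with hε₀def
      have hε₀pos : 0 < ε₀ := by positivity
      have hgu : UniformContinuous g := hgsupp.uniformContinuous_of_continuous hgcont
      obtain ⟨δ, hδpos, hδ⟩ := Metric.uniformContinuous_iff.mp hgu ε₀ hε₀pos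
      filter_upwards [hR0.eventually_lt_const (show (0:ℝ) < min (δ/2) 1 by positivity)] with n hn
      have hRδ : 2 * R n < δ := by
        have := lt_min_iff.mp hn
        linarith [this.1]
      have hR1 : R n < 1 := (lt_min_iff.mp hn).2
      have hfin : (D n ∩ tsupport g).Finite :=
        finite_discrete_inter_compact (hr n) (hdisc n) hTc
      have hfin' : {u : D n | (u : X) ∈ tsupport g}.Finite := by
        have heq : {u : D n | (u : X) ∈ tsupport g} = Subtype.val ⁻¹' (D n ∩ tsupport g) := by
          ext u; simp [u.2]
        rw [heq]
        exact hfin.preimage Subtype.val_injective.injOn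
      set F : Finset (D n) := hfin'.toFinset with hFdef
      have hFmem : ∀ u : D n, u ∈ F ↔ (u : X) ∈ tsupport g := fun u => hfin'.mem_toFinset
      have hφnorm : ∀ (u : D n) (x : X), ‖(φ n u.1 x : ℂ)‖ = φ n u.1 x := by
        intro u x
        rw [Complex.norm_real, Real.norm_eq_abs, abs_of_nonneg (hrange n u.1 u.2 x).1]
      have hφmem : ∀ u : D n, MemLp (fun x => (φ n u.1 x : ℂ)) 2 μ := by
        intro u
        have hb : ∀ x, ‖(φ n u.1 x : ℂ)‖ ≤ 1 := fun x => by
          rw [hφnorm u x]; exact (hrange n u.1 u.2 x).2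
        have h0 : ∀ x ∉ closedBall u.1 (2 * R n), (φ n u.1 x : ℂ) = 0 := fun x hx => by
          rw [mem_closedBall, not_le] at hx
          rw [hsupp n u.1 u.2 x hx.le]; norm_num
        refine ⟨(Complex.continuous_ofReal.measurable.comp (hmeas n u.1 u.2)).aestronglyMeasurable, ?_⟩
        refine lt_of_le_of_lt (eLpNorm_le_of_bound_support μ hb h0) ?_
        exact ENNReal.mul_lt_top ENNReal.coe_lt_top
          (ENNReal.rpow_lt_top_of_nonneg (by norm_num) measure_closedBall_lt_top.ne)
      set h : Lp ℂ 2 μ := ∑ u ∈ F, (g u.1) • ((hφmem u).toLp _) with hhdef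
      have hhK : h ∈ K n := by
        rw [hK n]
        refine Submodule.le_topologicalClosure _ ?_
        refine Submodule.sum_mem _ fun u _ => Submodule.smul_mem _ _ ?_
        exact Submodule.subset_span ⟨u.1, u.2, (hφmem u).coeFn_toLp⟩
      refine ⟨h, hhK, ?_⟩
      set gn : X → ℂ := fun x => ∑ u ∈ F, g u.1 * (φ n u.1 x : ℂ) with hgndef
      have hcoe_gen : ∀ s : Finset (D n),
          ((∑ u ∈ s, (g u.1) • ((hφmem u).toLp _) : Lp ℂ 2 μ) : X → ℂ) =ᵐ[μ]
            fun x => ∑ u ∈ s, g u.1 * (φ n u.1 x : ℂ) := by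
        intro s
        induction s using Finset.induction_on with
        | empty => simp only [Finset.sum_empty]; exact Lp.coeFn_zero ℂ 2 μ
        | @insert u s hus ih =>
          rw [Finset.sum_insert hus]
          filter_upwards [Lp.coeFn_add ((g u.1) • ((hφmem u).toLp _))
            (∑ v ∈ s, (g v.1) • ((hφmem v).toLp _)),
            Lp.coeFn_smul (g u.1) ((hφmem u).toLp _), (hφmem u).coeFn_toLp, ih] with x h1 h2 h3 h4
          rw [h1, Pi.add_apply, h4, h2, Pi.smul_apply, h3, Finset.sum_insert hus, smul_eq_mul]
      have hcoe : (h : X → ℂ) =ᵐ[μ] gn := hcoe_gen F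
      have hpb : ∀ x, ‖g x - gn x‖ ≤ ε₀ := by
        intro x
        have hS1 : HasSum (fun u : D n => ((φ n u.1 x : ℝ) : ℂ)) 1 := by
          have := (hsum n x).mapL Complex.ofRealCLM
          simpa using this
        have hsg : HasSum (fun u : D n => g x * (φ n u.1 x : ℂ)) (g x) := by
          simpa using hS1.mul_left (g x)
        have hsgn : HasSum (fun u : D n => g u.1 * (φ n u.1 x : ℂ)) (gn x) := by
          apply hasSum_sum_of_ne_finset_zero
          intro u hu
          have : g u.1 = 0 := image_eq_zero_of_notMem_tsupport fun hmem => hu ((hFmem u).2 hmem)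
          simp [this]
        have hdiff := hsg.sub hsgn
        have hbsum : HasSum (fun u : D n => ε₀ * φ n u.1 x) ε₀ := by
          simpa using (hsum n x).mul_left ε₀
        have hterm : ∀ u : D n,
            ‖g x * (φ n u.1 x : ℂ) - g u.1 * (φ n u.1 x : ℂ)‖ ≤ ε₀ * φ n u.1 x := by
          intro u
          by_cases hzero : φ n u.1 x = 0
          · simp [hzero]
          · have hφpos : 0 < φ n u.1 x :=
              lt_of_le_of_ne (hrange n u.1 u.2 x).1 (Ne.symm hzero)
            have hdistx : dist x u.1 < 2 * R n := by
              by_contra hcon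
              exact hzero (hsupp n u.1 u.2 x (not_lt.mp hcon))
            have hgd : dist (g x) (g u.1) < ε₀ := hδ (by linarith)
            calc ‖g x * (φ n u.1 x : ℂ) - g u.1 * (φ n u.1 x : ℂ)‖
                = ‖g x - g u.1‖ * ‖(φ n u.1 x : ℂ)‖ := by rw [← sub_mul, norm_mul]
              _ = dist (g x) (g u.1) * φ n u.1 x := by rw [dist_eq_norm, hφnorm u x]
              _ ≤ ε₀ * φ n u.1 x := mul_le_mul_of_nonneg_right hgd.le hφpos.le
        have hsummable : Summable fun u : D n =>
            ‖g x * (φ n u.1 x : ℂ) - g u.1 * (φ n u.1 x : ℂ)‖ :=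
          Summable.of_nonneg_of_le (fun _ => norm_nonneg _) hterm hbsum.summable
        calc ‖g x - gn x‖
            = ‖∑' u : D n, (g x * (φ n u.1 x : ℂ) - g u.1 * (φ n u.1 x : ℂ))‖ := by
              rw [hdiff.tsum_eq]
          _ ≤ ∑' u : D n, ‖g x * (φ n u.1 x : ℂ) - g u.1 * (φ n u.1 x : ℂ)‖ :=
              norm_tsum_le_tsum_norm hsummable
          _ ≤ ∑' u : D n, ε₀ * φ n u.1 x := Summable.tsum_le_tsum hterm hsummable hbsum.summable
          _ = ε₀ := hbsum.tsum_eq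
      have hvan : ∀ x ∉ S, g x - gn x = 0 := by
        intro x hx
        have hgx : g x = 0 := by
          apply image_eq_zero_of_notMem_tsupport
          intro hmem
          exact hx (self_subset_cthickening _ hmem)
        have hgnx : gn x = 0 := by
          apply Finset.sum_eq_zero
          intro u hu
          by_cases hzero : φ n u.1 x = 0
          · simp [hzero]
          · exfalso
            have hdistx : dist x u.1 < 2 * R n := by
              by_contra hcon
              exact hzero (hsupp n u.1 u.2 x (not_lt.mp hcon))
            exact hx (mem_cthickening_of_dist_le x u.1 2 _ ((hFmem u).1 hu)
              (by nlinarith [hRnn n]))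
        rw [hgx, zero_sub, neg_eq_zero]
        exact hgnx
      have hbound := eLpNorm_le_of_bound_support μ (S := S) (c := ε₀) hpb hvan
      have hco2 : (⇑(gL - h) : X → ℂ) =ᵐ[μ] fun x => g x - gn x := by
        filter_upwards [Lp.coeFn_sub gL h, hgmem.coeFn_toLp, hcoe] with x h1 h2 h3
        rw [h1, Pi.sub_apply, h2, h3]
      rw [Lp.norm_def, eLpNorm_congr_ae hco2]
      have hfinb : (‖ε₀‖₊ : ℝ≥0∞) * μ S ^ (1/(2:ℝ≥0∞).toReal) ≠ ∞ :=
        (ENNReal.mul_lt_top ENNReal.coe_lt_top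
          (ENNReal.rpow_lt_top_of_nonneg (by norm_num) hμS.ne)).ne
      have htr := ENNReal.toReal_mono hfinb hbound
      refine htr.trans ?_
      have hval : ((‖ε₀‖₊ : ℝ≥0∞) * μ S ^ (1/(2:ℝ≥0∞).toReal)).toReal = ε₀ * M := by
        rw [ENNReal.toReal_mul, ENNReal.coe_toReal, coe_nnnorm, Real.norm_eq_abs,
          abs_of_pos hε₀pos, hMdef, ENNReal.toReal_rpow]
        norm_num
      rw [hval]
      have hM1 : ε₀ * (M + 1) = ε / 3 := div_mul_cancel₀ _ (by positivity)
      nlinarith [hε₀pos]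
  filter_upwards [main] with n hn
  obtain ⟨h, hhK, hgh⟩ := hn
  have h1 := projle n f h hhK
  have h2 : ‖f - h‖ ≤ ‖f - gL‖ + ‖gL - h‖ := by
    calc ‖f - h‖ = ‖(f - gL) + (gL - h)‖ := by abel_nf
      _ ≤ ‖f - gL‖ + ‖gL - h‖ := norm_add_le _ _
  rw [norm_norm]
  calc ‖P n f - f‖ ≤ ‖f - h‖ := h1
    _ ≤ ‖f - gL‖ + ‖gL - h‖ := h2
    _ ≤ ε/3 + ε/3 := add_le_add hfgL hgh
    _ < ε := by linarith
end

section
/- Let (X,d,μ) be a proper metric measure space of bounded geometry with no isolated points, and let D ⊆ X be a Delone set. Then there exists a family {V_u}_{u∈D} of open subsets of X such that: (V1) B_{r(D)/2}(u) ⊆ V_u ⊆ B_{2R(D)}(u) for every u ∈ D; (V2) V_u ∩ V_v = ∅ for all distinct u,v ∈ D, and X = ⋃_{u∈D} \overline{V_u}; (V3) for every u ∈ D and every ε > 0 there exists δ > 0 such that μ(V_u \ V_u^{(-δ)}) < ε, where V^{(-δ)} = {x ∈ X : d(x, X \ V) > δ}; and (V4) L²(V_u, μ) is infinite-dimensional for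 every u ∈ D. -/
open Metric Set MeasureTheory ENNReal

/-- `D` is a Delone set: `r`-discrete and `R`-dense for some `r, R > 0`. -/
def IsDelone {X : Type*} [MetricSpace X] (D : Set X) : Prop :=
  ∃ r > (0 : ℝ), ∃ R > (0 : ℝ), IsDiscreteWith r D ∧ IsDenseWith R D

/-- `r(D)`: the infimum of distances between distinct points of `D`. -/
noncomputable def rSep {X : Type*} [MetricSpace X] (D : Set X) : ℝ :=
  sInf {t : ℝ | ∃ x ∈ D, ∃ y ∈ D, x ≠ y ∧ t = dist x y}

/-- `R(D)`: the infimum of the `R` such that `D` is `R`-dense. -/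
noncomputable def RDen {X : Type*} [MetricSpace X] (D : Set X) : ℝ :=
  sInf {R : ℝ | IsDenseWith R D}

namespace VorAux

variable {X : Type*} [MetricSpace X]

lemma isDenseWith_mono {D : Set X} {R R' : ℝ} (h : R ≤ R') (hR : IsDenseWith R D) :
    IsDenseWith R' D := fun x => (hR x).imp fun y hy => ⟨hy.1, hy.2.trans h⟩

lemma denseWith_of_RDen_lt {D : Set X} (hne : {R : ℝ | IsDenseWith R D}.Nonempty)
    {R : ℝ} (h : RDen D < R) : IsDenseWith R D := by
  by_contra hc
  have hlb : ∀ R' ∈ {R : ℝ | IsDenseWith R D}, R ≤ R' := by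
    intro R' hR'
    by_contra hlt
    exact hc (isDenseWith_mono (le_of_not_ge hlt) hR')
  exact absurd h (not_lt.2 (le_csInf hne hlb))

lemma rSep_le {D : Set X} {u v : X} (hu : u ∈ D) (hv : v ∈ D) (huv : u ≠ v) :
    rSep D ≤ dist u v := by
  apply csInf_le
  · exact ⟨0, by rintro t ⟨x, hx, y, hy, hxy, rfl⟩; exact dist_nonneg⟩
  · exact ⟨u, hu, v, hv, huv, rfl⟩

lemma le_rSep {D : Set X} {r : ℝ} (hd : IsDiscreteWith r D)
    (h2 : ∃ u ∈ D, ∃ v ∈ D, u ≠ v) : r ≤ rSep D := by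
  obtain ⟨u, hu, v, hv, huv⟩ := h2
  refine le_csInf ⟨dist u v, u, hu, v, hv, huv, rfl⟩ ?_
  rintro t ⟨x, hx, y, hy, hxy, rfl⟩
  exact hd x hx y hy hxy

lemma rSep_eq_zero {D : Set X} (h2 : ¬ ∃ u ∈ D, ∃ v ∈ D, u ≠ v) : rSep D = 0 := by
  have : {t : ℝ | ∃ x ∈ D, ∃ y ∈ D, x ≠ y ∧ t = dist x y} = ∅ := by
    ext t
    simp only [mem_setOf_eq, mem_empty_iff_false, iff_false]
    rintro ⟨x, hx, y, hy, hxy, rfl⟩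
    exact h2 ⟨x, hx, y, hy, hxy⟩
  rw [rSep, this, Real.sInf_empty]

lemma RDen_pos [Nonempty X] {D : Set X}
    (hiso : ∀ x : X, ¬ IsOpen ({x} : Set X)) {r : ℝ} (hr : 0 < r)
    (hdisc : IsDiscreteWith r D) (hne : {R : ℝ | IsDenseWith R D}.Nonempty) :
    0 < RDen D := by
  rcases lt_or_ge 0 (RDen D) with h | h
  · exact h
  exfalso
  obtain ⟨R₀, hR₀⟩ := hne
  obtain ⟨u, hu, -⟩ := hR₀ (Classical.arbitrary X)
  apply hiso u
  rw [Metric.isOpen_singleton_iff]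
  refine ⟨r, hr, fun y hy => ?_⟩
  by_contra hyu
  have hd : 0 < dist y u := dist_pos.2 hyu
  have hRpos : 0 < min (dist y u) (r - dist y u) / 2 := by
    have : 0 < r - dist y u := by linarith
    positivity
  have hdense : IsDenseWith (min (dist y u) (r - dist y u) / 2) D :=
    denseWith_of_RDen_lt ⟨R₀, hR₀⟩ (lt_of_le_of_lt h hRpos)
  obtain ⟨v, hv, hyv⟩ := hdense y
  have h1 : min (dist y u) (r - dist y u) / 2 < dist y u := by
    have := min_le_left (dist y u) (r - dist y u); linarith
  have h2 : min (dist y u) (r - dist y u) / 2 < r - dist y u := by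
    have := min_le_right (dist y u) (r - dist y u)
    have : 0 < r - dist y u := by linarith
    have := min_le_right (dist y u) (r - dist y u); linarith
  have hvu : v ≠ u := by
    rintro rfl
    linarith
  have hlt : dist v u < r := by
    have htri := dist_triangle v y u
    have := dist_comm v y
    linarith [dist_comm y v]
  exact absurd (hdisc v hv u hu hvu) (not_le.2 hlt)

lemma dist_le_of_mem_small {D : Set X} {u x : X} (hu : u ∈ D)
    (hx : dist x u < rSep D / 2) {R₁ : ℝ} (hd : IsDenseWith R₁ D) : dist x u ≤ R₁ := by
  obtain ⟨v, hv, hxv⟩ := hd x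
  rcases eq_or_ne v u with rfl | hne
  · exact hxv
  · have h1 : rSep D ≤ dist u v := rSep_le hu hv hne.symm
    have htri : dist u v ≤ dist u x + dist x v := dist_triangle u x v
    have hcomm : dist u x = dist x u := dist_comm u x
    linarith

lemma finite_discrete_inter [ProperSpace X] {D : Set X} {r : ℝ} (hr : 0 < r)
    (hdisc : IsDiscreteWith r D) (x : X) (T : ℝ) : (D ∩ closedBall x T).Finite := by
  set K := closedBall x T
  have hK : IsCompact K := isCompact_closedBall x T
  have hcov : K ⊆ ⋃ y ∈ K, ball y (r / 2) := fun y hy =>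
    mem_biUnion hy (mem_ball_self (by linarith))
  obtain ⟨t, htK, htfin, hcov'⟩ := hK.elim_finite_subcover_image
    (fun y _ => isOpen_ball) hcov
  have hsub : D ∩ K ⊆ ⋃ y ∈ t, (D ∩ K) ∩ ball y (r / 2) := by
    intro z hz
    obtain ⟨y, hy, hzy⟩ := mem_iUnion₂.1 (hcov' hz.2)
    exact mem_iUnion₂.2 ⟨y, hy, hz, hzy⟩
  refine Set.Finite.subset (Set.Finite.biUnion htfin fun y _ => ?_) hsub
  apply Set.Subsingleton.finite
  intro a ha b hb
  by_contra hab
  have : dist a b < r := by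
    have h1 := mem_ball.1 ha.2
    have h2 := mem_ball.1 hb.2
    have := dist_triangle a y b
    have := dist_comm b y
    linarith [dist_comm y b]
  exact absurd (hdisc a ha.1.1 b hb.1.1 hab) (not_le.2 this)


open Classical in
/-- A chosen point of `D` different from `u`, if one exists; otherwise `u`. -/
noncomputable def gpt (D : Set X) (u : X) : X :=
  if h : ∃ v ∈ D, v ≠ u then h.choose else u

lemma gpt_spec (D : Set X) (u : X) :
    (gpt D u ∈ D ∧ gpt D u ≠ u) ∨ (gpt D u = u ∧ ∀ v ∈ D, v = u) := by
  unfold gpt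
  split
  next h => exact Or.inl ⟨h.choose_spec.1, h.choose_spec.2⟩
  next h => push_neg at h; exact Or.inr ⟨rfl, h⟩


/-- One Voronoi-type cell. -/
def cellA (D : Set X) (s R₀ : ℝ) (u : X) (Wp : Set X) : Set X :=
  ball u s ∪ (ball u R₀ \
    (closure Wp ∪ closure (⋃ v ∈ D \ {u}, ball v s) ∪ {gpt D u}))

open Classical in
/-- Union of the first `n` cells. -/
noncomputable def WA (D : Set X) (f : ℕ → X) (s R₀ : ℝ) : ℕ → Set X
  | 0 => ∅
  | n+1 => WA D f s R₀ n ∪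
      (if ∀ m < n, f m ≠ f n then cellA D s R₀ (f n) (WA D f s R₀ n) else ∅)

open Classical in
/-- The `n`-th cell (empty if `f n` is a repeat). -/
noncomputable def ViA (D : Set X) (f : ℕ → X) (s R₀ : ℝ) (n : ℕ) : Set X :=
  if ∀ m < n, f m ≠ f n then cellA D s R₀ (f n) (WA D f s R₀ n) else ∅

variable {D : Set X} {f : ℕ → X} {s R₀ : ℝ}

lemma WA_zero : WA D f s R₀ 0 = ∅ := rfl

lemma cellA_def (u : X) (Wp : Set X) : cellA D s R₀ u Wp =
    ball u s ∪ (ball u R₀ \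
      (closure Wp ∪ closure (⋃ v ∈ D \ {u}, ball v s) ∪ {gpt D u})) := rfl

lemma WA_succ (n : ℕ) : WA D f s R₀ (n+1) = WA D f s R₀ n ∪ ViA D f s R₀ n := by
  rw [WA, ViA]

lemma ViA_of_fresh {n : ℕ} (h : ∀ m < n, f m ≠ f n) :
    ViA D f s R₀ n = cellA D s R₀ (f n) (WA D f s R₀ n) := if_pos h

lemma ViA_of_not_fresh {n : ℕ} (h : ¬ ∀ m < n, f m ≠ f n) :
    ViA D f s R₀ n = ∅ := if_neg h

lemma WA_mono : Monotone (WA D f s R₀) := by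
  apply monotone_nat_of_le_succ
  intro n
  rw [WA_succ]
  exact subset_union_left

lemma ViA_subset_WA {m n : ℕ} (h : m < n) : ViA D f s R₀ m ⊆ WA D f s R₀ n :=
  subset_union_right.trans ((WA_succ m).symm.subset.trans (WA_mono h))

lemma isOpen_cellA (u : X) (Wp : Set X) : IsOpen (cellA D s R₀ u Wp) :=
  isOpen_ball.union (isOpen_ball.sdiff
    ((isClosed_closure.union isClosed_closure).union isClosed_singleton))

lemma isOpen_ViA (n : ℕ) : IsOpen (ViA D f s R₀ n) := by
  rw [ViA]
  split_ifs with h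
  · exact isOpen_cellA _ _
  · exact isOpen_empty

lemma cellA_subset (u : X) (Wp : Set X) (hss : ball u s ⊆ ball u R₀) :
    cellA D s R₀ u Wp ⊆ ball u R₀ :=
  union_subset hss (diff_subset)

lemma ball_subset_cellA (u : X) (Wp : Set X) : ball u s ⊆ cellA D s R₀ u Wp :=
  subset_union_left

lemma WA_eq_biUnion (n : ℕ) : WA D f s R₀ n = ⋃ m ∈ Iio n, ViA D f s R₀ m := by
  induction n with
  | zero => simp [WA]
  | succ n ih =>
      rw [WA_succ, ih]
      ext x
      simp only [mem_union, mem_iUnion, mem_Iio, exists_prop, Nat.lt_succ_iff_lt_or_eq]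
      constructor
      · rintro (⟨m, hm, hx⟩ | hx)
        · exact ⟨m, Or.inl hm, hx⟩
        · exact ⟨n, Or.inr rfl, hx⟩
      · rintro ⟨m, hm | rfl, hx⟩
        · exact Or.inl ⟨m, hm, hx⟩
        · exact Or.inr hx

lemma closure_WA (n : ℕ) :
    closure (WA D f s R₀ n) = ⋃ m ∈ Iio n, closure (ViA D f s R₀ m) := by
  rw [WA_eq_biUnion, (Set.finite_Iio n).closure_biUnion]

lemma disjoint_ViA (hfD : ∀ n, f n ∈ D)
    (hball : ∀ u ∈ D, ∀ v ∈ D, u ≠ v → Disjoint (ball u s) (ball v s))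
    {m n : ℕ} (h : m < n) : Disjoint (ViA D f s R₀ n) (ViA D f s R₀ m) := by
  by_cases hn : ∀ k < n, f k ≠ f n
  · rw [ViA_of_fresh hn]
    apply Set.disjoint_union_left.2
    constructor
    · -- small ball of n vs cell m
      by_cases hm : ∀ k < m, f k ≠ f m
      · rw [ViA_of_fresh hm]
        apply Set.disjoint_union_right.2
        refine ⟨hball (f n) (hfD n) (f m) (hfD m) (fun he => hn m h he.symm), ?_⟩
        refine Set.disjoint_left.2 fun x hx hx' => ?_
        have hmem : x ∈ closure (⋃ v ∈ D \ {f m}, ball v s) :=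
          subset_closure (mem_biUnion (⟨hfD n, fun he => hn m h ((mem_singleton_iff.1 he)).symm⟩ : f n ∈ D \ {f m}) hx)
        exact hx'.2 (Or.inl (Or.inr hmem))
      · rw [ViA_of_not_fresh hm]; exact disjoint_empty _
    · -- second part of cell n avoids closure of W n ⊇ ViA m
      refine Set.disjoint_left.2 fun x hx hx' => ?_
      exact hx.2 (Or.inl (Or.inl (subset_closure (ViA_subset_WA h hx'))))
  · rw [ViA_of_not_fresh hn]
    exact empty_disjoint _

lemma gpt_not_mem_cellA (u : X) (Wp : Set X) (hg : gpt D u ∉ ball u s) :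
    gpt D u ∉ cellA D s R₀ u Wp := by
  rintro (h | h)
  · exact hg h
  · exact h.2 (Or.inr rfl)

lemma exists_near (hiso : ∀ x : X, ¬ IsOpen ({x} : Set X)) (x : X) :
    ∀ ρ : ℝ, 0 < ρ → ∃ y : X, dist y x < ρ ∧ y ≠ x := by
  intro ρ hρ
  have h := hiso x
  rw [Metric.isOpen_singleton_iff] at h
  push_neg at h
  obtain ⟨y, hy1, hy2⟩ := h ρ hρ
  exact ⟨y, hy1, hy2⟩

lemma infinite_dim {X : Type*} [MetricSpace X] [MeasurableSpace X] [BorelSpace X]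
    (μ : Measure X) (hbg : BoundedGeometry μ)
    (hiso : ∀ x : X, ¬ IsOpen ({x} : Set X))
    {V : Set X} (hVo : IsOpen V) (hVne : V.Nonempty) :
    ¬ FiniteDimensional ℂ (Lp ℂ 2 (μ.restrict V)) := by
  intro hfd
  obtain ⟨x, hx⟩ := hVne
  obtain ⟨r0, hr0, hball⟩ := Metric.isOpen_iff.1 hVo x hx
  choose Y hY1 hY2 using exists_near hiso x
  -- the recursive sequence
  set step : X → X := fun w => if h : 0 < dist w x / 2 then Y _ h else x with hstep_def
  set z : ℕ → X := fun k => step^[k] (Y (r0/2) (by positivity)) with hz_def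
  have hz0 : z 0 = Y (r0/2) (by positivity) := rfl
  have hzsucc : ∀ k, z (k+1) = step (z k) := by
    intro k
    simp only [hz_def, Function.iterate_succ_apply']
  have hstep : ∀ w : X, w ≠ x → dist (step w) x < dist w x / 2 ∧ step w ≠ x := by
    intro w hw
    have hp : 0 < dist w x / 2 := half_pos (dist_pos.2 hw)
    rw [hstep_def]
    simp only [dif_pos hp]
    exact ⟨hY1 _ hp, hY2 _ hp⟩
  have hzne : ∀ k, z k ≠ x := by
    intro k
    induction k with
    | zero => rw [hz0]; exact hY2 _ _
    | succ k ih => rw [hzsucc]; exact (hstep _ ih).2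
  set dd : ℕ → ℝ := fun k => dist (z k) x with hdd_def
  have hdpos : ∀ k, 0 < dd k := fun k => dist_pos.2 (hzne k)
  have hdec : ∀ k, dd (k+1) < dd k / 2 := by
    intro k
    have := (hstep (z k) (hzne k)).1
    simpa [hdd_def, hzsucc k] using this
  have hd0 : ∀ k, dd k < r0 / 2 := by
    intro k
    induction k with
    | zero => simpa [hdd_def, hz0] using hY1 (r0/2) (by positivity)
    | succ k ih =>
        have h1 := hdec k
        have h2 := hdpos k
        linarith
  have hlt : ∀ j k, j < k → dd k < dd j / 2 := by
    intro j k hjk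
    induction k with
    | zero => omega
    | succ k ih =>
        rcases Nat.lt_succ_iff_lt_or_eq.1 hjk with h | rfl
        · have h1 := hdec k
          have h2 := hdpos k
          have h3 := ih h
          linarith
        · exact hdec j
  set S : ℕ → Set X := fun k => ball (z k) (dd k / 4) with hS_def
  have hSV : ∀ k, S k ⊆ V := by
    intro k w hw
    apply hball
    rw [mem_ball] at hw ⊢
    have h1 : dist w x ≤ dist w (z k) + dist (z k) x := dist_triangle w (z k) x
    have h2 := hd0 k
    have h3 := hdpos k
    simp only [hdd_def] at *
    linarith
  have hSdisj : ∀ j k, j ≠ k → Disjoint (S j) (S k) := by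
    have key : ∀ j k, j < k → Disjoint (S j) (S k) := by
      intro j k hjk
      rw [Set.disjoint_left]
      intro w hwj hwk
      rw [hS_def, mem_ball] at hwj hwk
      have h1 : dd j ≤ dist (z j) (z k) + dd k := by
        have := dist_triangle (z j) (z k) x
        simp only [hdd_def]
        linarith
      have h2 : dist (z j) (z k) ≤ dist w (z j) + dist w (z k) := by
        have := dist_triangle (z j) w (z k)
        have := dist_comm (z j) w
        linarith
      have h3 := hlt j k hjk
      have h4 := hdpos j
      have h5 := hdpos k
      linarith
    intro j k hjk
    rcases hjk.lt_or_gt with h | h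
    · exact key j k h
    · exact (key k j h).symm
  have hSmeas : ∀ k, MeasurableSet (S k) := fun k => isOpen_ball.measurableSet
  set ν := μ.restrict V with hν
  have hνS : ∀ k, ν (S k) = μ (S k) := by
    intro k
    rw [hν, Measure.restrict_apply (hSmeas k), inter_eq_self_of_subset_left (hSV k)]
  have hSpos : ∀ k, 0 < ν (S k) := by
    intro k
    obtain ⟨c, C, hc, hC, hb⟩ := hbg (dd k / 4) (by have := hdpos k; positivity)
    rw [hνS]
    exact lt_of_lt_of_le hc (hb (z k)).1
  have hSfin : ∀ k, ν (S k) ≠ ∞ := by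
    intro k
    obtain ⟨c, C, hc, hC, hb⟩ := hbg (dd k / 4) (by have := hdpos k; positivity)
    rw [hνS]
    exact ((hb (z k)).2.trans_lt hC).ne
  set e : ℕ → Lp ℂ 2 ν := fun k => indicatorConstLp 2 (hSmeas k) (hSfin k) (1 : ℂ) with he_def
  have he0 : ∀ k, e k ≠ 0 := by
    intro k h
    have hn : ‖e k‖ = ‖(1:ℂ)‖ * (ν (S k)).toReal ^ (1 / (2:ℝ≥0∞).toReal) :=
      norm_indicatorConstLp (by norm_num) (by norm_num)
    rw [h, norm_zero] at hn
    have hpos : 0 < (ν (S k)).toReal := ENNReal.toReal_pos (hSpos k).ne' (hSfin k)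
    have : (0:ℝ) < ‖(1:ℂ)‖ * (ν (S k)).toReal ^ (1 / (2:ℝ≥0∞).toReal) := by
      apply _root_.mul_pos (by norm_num)
      positivity
    linarith [hn ▸ this]
  have horto : ∀ j k, j ≠ k → (inner ℂ (e j) (e k)) = 0 := by
    intro j k hjk
    rw [MeasureTheory.L2.inner_def]
    have h1 : ⇑(e j) =ᵐ[ν] (S j).indicator (fun _ => (1:ℂ)) := indicatorConstLp_coeFn
    have h2 : ⇑(e k) =ᵐ[ν] (S k).indicator (fun _ => (1:ℂ)) := indicatorConstLp_coeFn
    rw [show (0:ℂ) = ∫ a, (0:ℂ) ∂ν by simp]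
    apply integral_congr_ae
    filter_upwards [h1, h2] with a ha1 ha2
    rw [ha1, ha2]
    by_cases hj : a ∈ S j
    · have hk : a ∉ S k := Set.disjoint_left.1 (hSdisj j k hjk) hj
      simp [Set.indicator_of_mem hj, Set.indicator_of_notMem hk]
    · simp [Set.indicator_of_notMem hj]
  have hind : LinearIndependent ℂ e := by
    rw [linearIndependent_iff']
    intro t g hsum i hit
    have h1 : (inner ℂ (e i) (∑ j ∈ t, g j • e j)) = g i * inner ℂ (e i) (e i) := by
      rw [inner_sum]
      rw [Finset.sum_eq_single i]
      · rw [inner_smul_right]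
      · intro j hj hji
        rw [inner_smul_right, horto i j (Ne.symm hji), mul_zero]
      · intro h
        exact absurd hit h
    rw [hsum, inner_zero_right] at h1
    have h2 : (inner ℂ (e i) (e i)) ≠ 0 := fun h => he0 i (inner_self_eq_zero.1 h)
    exact (mul_eq_zero.1 h1.symm).resolve_right h2
  have := hind.lt_aleph0_of_finiteDimensional
  simp [Cardinal.mk_nat] at this

end VorAux

/-- Existence of a Voronoi-type partition `{V_u}_{u∈D}` of a proper metric measure space
of bounded geometry with no isolated points, satisfying (V1)–(V4). -/
theorem exists_voronoi_partition {X : Type*} [MetricSpace X] [ProperSpace X]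
    [MeasurableSpace X] [BorelSpace X] (μ : Measure X) (hbg : BoundedGeometry μ)
    (hiso : ∀ x : X, ¬ IsOpen ({x} : Set X))
    (D : Set X) (hD : IsDelone D) :
    ∃ V : X → Set X,
      (∀ u ∈ D, IsOpen (V u)) ∧
      (∀ u ∈ D, ball u (rSep D / 2) ⊆ V u ∧ V u ⊆ ball u (2 * RDen D)) ∧
      (∀ u ∈ D, ∀ v ∈ D, u ≠ v → V u ∩ V v = ∅) ∧
      (⋃ u ∈ D, closure (V u)) = Set.univ ∧
      (∀ u ∈ D, ∀ ε : ℝ≥0∞, 0 < ε → ∃ δ : ℝ, 0 < δ ∧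
        μ (V u \ {x : X | δ < Metric.infDist x (V u)ᶜ}) < ε) ∧
      (∀ u ∈ D, ¬ FiniteDimensional ℂ (Lp ℂ 2 (μ.restrict (V u)))) := by
  classical
  rcases isEmpty_or_nonempty X with hXe | hXne
  · refine ⟨fun _ => ∅, ?_, ?_, ?_, ?_, ?_, ?_⟩
    · intro u _; exact isOpen_empty
    · intro u; exact isEmptyElim u
    · intro u; exact isEmptyElim u
    · have h1 : (univ : Set X) = ∅ := Set.univ_eq_empty_iff.2 hXe
      rw [h1]; simp
    · intro u; exact isEmptyElim u
    · intro u; exact isEmptyElim u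
  obtain ⟨r, hr, R, hRpos, hdisc, hdens⟩ := hD
  have hSne : {R' : ℝ | IsDenseWith R' D}.Nonempty := ⟨R, hdens⟩
  have hρ : 0 < RDen D := VorAux.RDen_pos hiso hr hdisc hSne
  set ρ := RDen D with hρdef
  set s := rSep D / 2 with hs
  set R₁ := ρ + ρ/4 with hR₁def
  set R₀ := ρ + ρ/2 with hR₀def
  have hR₀pos : 0 < R₀ := by rw [hR₀def]; linarith
  have hR₁R₀ : R₁ < R₀ := by rw [hR₀def, hR₁def]; linarith
  have hdens₁ : IsDenseWith R₁ D :=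
    VorAux.denseWith_of_RDen_lt hSne (by rw [hR₁def]; linarith)
  obtain ⟨x₀⟩ := hXne
  have hDne : D.Nonempty := by obtain ⟨y, hy, -⟩ := hdens x₀; exact ⟨y, hy⟩
  have hfin : ∀ (x : X) (T : ℝ), (D ∩ closedBall x T).Finite :=
    fun x T => VorAux.finite_discrete_inter hr hdisc x T
  have hDcnt : D.Countable := by
    have hsub : D ⊆ ⋃ n : ℕ, D ∩ closedBall x₀ n := by
      intro d hd
      obtain ⟨n, hn⟩ := exists_nat_ge (dist d x₀)
      exact mem_iUnion.2 ⟨n, hd, mem_closedBall.2 hn⟩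
    exact (Set.countable_iUnion fun n : ℕ => (hfin x₀ (n:ℝ)).countable).mono hsub
  obtain ⟨f, hf⟩ := hDcnt.exists_eq_range hDne
  have hfD : ∀ n, f n ∈ D := fun n => hf ▸ mem_range_self n
  have hsmall : ∀ u ∈ D, ball u s ⊆ ball u R₀ := by
    intro u hu x hx
    rw [mem_ball] at hx ⊢
    rw [hs] at hx
    exact (VorAux.dist_le_of_mem_small hu hx hdens₁).trans_lt hR₁R₀
  have hball2 : ∀ u ∈ D, ∀ v ∈ D, u ≠ v → Disjoint (ball u s) (ball v s) := by
    intro u hu v hv huv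
    rw [Set.disjoint_left]
    intro x hxu hxv
    rw [mem_ball] at hxu hxv
    rw [hs] at hxu hxv
    have h1 := VorAux.rSep_le hu hv huv
    have h2 := dist_triangle u x v
    have h3 := dist_comm u x
    linarith
  set V : X → Set X :=
    fun x => if h : ∃ n, f n = x then VorAux.ViA D f s R₀ (Nat.find h) else ∅ with hV
  have hVspec : ∀ u ∈ D, ∃ n, (∀ m < n, f m ≠ f n) ∧ f n = u ∧
      V u = VorAux.ViA D f s R₀ n := by
    intro u hu
    have h : ∃ n, f n = u := by rw [hf] at hu; exact hu
    refine ⟨Nat.find h, ?_, Nat.find_spec h, ?_⟩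
    · intro m hm heq
      exact Nat.find_min h hm (heq.trans (Nat.find_spec h))
    · simp only [hV]
      rw [dif_pos h]
  have hVfresh : ∀ n, (∀ m < n, f m ≠ f n) → V (f n) = VorAux.ViA D f s R₀ n := by
    intro n hfr
    have h : ∃ m, f m = f n := ⟨n, rfl⟩
    have heq : Nat.find h = n := by
      rcases lt_or_eq_of_le (Nat.find_min' h (rfl : f n = f n)) with hlt | he
      · exact absurd (Nat.find_spec h) (hfr _ hlt)
      · exact he
    simp only [hV]
    rw [dif_pos h, heq]
  have hV1 : ∀ u ∈ D, ball u s ⊆ V u := by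
    intro u hu
    obtain ⟨n, hfr, hfn, hVeq⟩ := hVspec u hu
    rw [hVeq, VorAux.ViA_of_fresh hfr, ← hfn]
    exact VorAux.ball_subset_cellA _ _
  have hsing_sub : ∀ u ∈ D, (∀ w ∈ D, w = u) → ball u R₀ \ {u} ⊆ V u := by
    intro u hu hall
    obtain ⟨n, hfr, hfn, hVeq⟩ := hVspec u hu
    have hn0 : n = 0 := by
      by_contra h0
      exact hfr 0 (Nat.pos_of_ne_zero h0) (by rw [hall (f 0) (hfD 0), hfn])
    subst hn0
    rw [hVeq, VorAux.ViA_of_fresh hfr, hfn, VorAux.WA_zero, VorAux.cellA_def]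
    have hD' : D \ {u} = ∅ := by
      ext w
      simp only [mem_diff, mem_singleton_iff, mem_empty_iff_false, iff_false, not_and, not_not]
      intro hw
      exact hall w hw
    have hgpt : VorAux.gpt D u = u := by
      rcases VorAux.gpt_spec D u with ⟨hgD, hgne⟩ | ⟨he, -⟩
      · exact absurd (hall _ hgD) hgne
      · exact he
    intro y hy
    right
    refine ⟨hy.1, ?_⟩
    rintro ((h | h) | h)
    · rw [closure_empty] at h; exact h
    · rw [hD'] at h; simp at h
    · rw [hgpt] at h; exact hy.2 h
  have hnear : ∀ u : X, u ∈ closure (ball u R₀ \ {u}) := by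
    intro u
    rw [Metric.mem_closure_iff]
    intro ε hε
    obtain ⟨y, hy1, hy2⟩ := VorAux.exists_near hiso u (min ε R₀) (lt_min hε hR₀pos)
    refine ⟨y, ⟨mem_ball.2 (hy1.trans_le (min_le_right _ _)), hy2⟩, ?_⟩
    rw [dist_comm]
    exact hy1.trans_le (min_le_left _ _)
  have hloc : ∀ (E : Set X), E ⊆ D → ∀ x : X, x ∈ closure (⋃ w ∈ E, ball w s) →
      ∃ w ∈ D, x ∈ closure (ball w s) := by
    intro E hE x hx
    set F := D ∩ closedBall x (s + 1) with hF
    have hFfin : F.Finite := hfin x (s + 1)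
    have hsplit : (⋃ w ∈ E, ball w s) ⊆ (⋃ w ∈ F, ball w s) ∪ (⋃ w ∈ E \ F, ball w s) := by
      intro y hy
      obtain ⟨w, hw, hyw⟩ := mem_iUnion₂.1 hy
      by_cases hwF : w ∈ F
      · exact Or.inl (mem_biUnion hwF hyw)
      · exact Or.inr (mem_biUnion ⟨hw, hwF⟩ hyw)
    have hZ : (⋃ w ∈ E \ F, ball w s) ⊆ {y : X | 1 ≤ dist y x} := by
      intro y hy
      obtain ⟨w, hw, hyw⟩ := mem_iUnion₂.1 hy
      have hwD : w ∈ D := hE hw.1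
      have hwB : ¬ dist w x ≤ s + 1 := fun hc => hw.2 ⟨hwD, mem_closedBall.2 hc⟩
      rw [mem_ball] at hyw
      have h1 := dist_triangle w y x
      have h2 := dist_comm w y
      push_neg at hwB
      simp only [mem_setOf_eq]
      linarith
    have hZcl : IsClosed {y : X | 1 ≤ dist y x} :=
      isClosed_le continuous_const (continuous_id.dist continuous_const)
    have hxZ : x ∉ closure (⋃ w ∈ E \ F, ball w s) := by
      intro hc
      have h1 := closure_minimal hZ hZcl hc
      simp only [mem_setOf_eq, dist_self] at h1
      linarith
    have hx2 : x ∈ closure (⋃ w ∈ F, ball w s) := by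
      have h1 := closure_mono hsplit hx
      rw [closure_union] at h1
      exact h1.resolve_right hxZ
    rw [hFfin.closure_biUnion] at hx2
    obtain ⟨w, hwF, hxw⟩ := mem_iUnion₂.1 hx2
    exact ⟨w, hwF.1, hxw⟩
  refine ⟨V, ?_, ?_, ?_, ?_, ?_, ?_⟩
  · -- openness
    intro u hu
    obtain ⟨n, hfr, hfn, hVeq⟩ := hVspec u hu
    rw [hVeq]
    exact VorAux.isOpen_ViA n
  · -- V1
    intro u hu
    obtain ⟨n, hfr, hfn, hVeq⟩ := hVspec u hu
    constructor
    · exact hV1 u hu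
    · rw [hVeq, VorAux.ViA_of_fresh hfr, hfn]
      refine (VorAux.cellA_subset u _ (hsmall u hu)).trans (ball_subset_ball ?_)
      rw [hR₀def]; rw [hρdef] at hρ ⊢; linarith
  · -- disjointness
    intro u hu v hv huv
    obtain ⟨n, hfrn, hfn, hVeqn⟩ := hVspec u hu
    obtain ⟨m, hfrm, hfm, hVeqm⟩ := hVspec v hv
    have hnm : n ≠ m := fun he => huv (hfn.symm.trans (he ▸ hfm))
    rw [hVeqn, hVeqm]
    rcases lt_or_gt_of_ne hnm with h | h
    · exact Set.disjoint_iff_inter_eq_empty.1 ((VorAux.disjoint_ViA hfD hball2 h).symm)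
    · exact Set.disjoint_iff_inter_eq_empty.1 (VorAux.disjoint_ViA hfD hball2 h)
  · -- covering
    apply Set.eq_univ_of_forall
    intro x
    rw [mem_iUnion₂]
    obtain ⟨v, hv, hxv⟩ := hdens₁ x
    obtain ⟨n, hfr, hfn, hVeq⟩ := hVspec v hv
    by_cases hc1 : x ∈ closure (VorAux.WA D f s R₀ n)
    · rw [VorAux.closure_WA] at hc1
      obtain ⟨m, _, hxm⟩ := mem_iUnion₂.1 hc1
      by_cases hfrm : ∀ k < m, f k ≠ f m
      · exact ⟨f m, hfD m, by rw [hVfresh m hfrm]; exact hxm⟩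
      · rw [VorAux.ViA_of_not_fresh hfrm, closure_empty] at hxm
        exact absurd hxm (notMem_empty x)
    by_cases hc2 : x ∈ closure (⋃ w ∈ D \ {v}, ball w s)
    · obtain ⟨w, hw, hxw⟩ := hloc (D \ {v}) diff_subset x hc2
      exact ⟨w, hw, closure_mono (hV1 w hw) hxw⟩
    by_cases hc3 : x = VorAux.gpt D v
    · rcases VorAux.gpt_spec D v with ⟨hgD, hgne⟩ | ⟨hgeq, hall⟩
      · have hsx : 0 < s := by
          rw [hs]
          have h1 := VorAux.le_rSep hdisc ⟨_, hgD, _, hv, hgne⟩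
          linarith
        subst hc3
        exact ⟨_, hgD, subset_closure (hV1 _ hgD (mem_ball_self hsx))⟩
      · have hxv' : x = v := hc3.trans hgeq
        exact ⟨v, hv, by rw [hxv']; exact closure_mono (hsing_sub v hv hall) (hnear v)⟩
    · refine ⟨v, hv, subset_closure ?_⟩
      rw [hVeq, VorAux.ViA_of_fresh hfr, VorAux.cellA_def]
      right
      refine ⟨mem_ball.2 (by rw [hfn]; exact lt_of_le_of_lt hxv hR₁R₀), ?_⟩
      rintro ((h | h) | h)
      · exact hc1 h
      · rw [hfn] at h; exact hc2 h
      · rw [hfn] at h; exact hc3 h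
  · -- V3
    intro u hu ε hε
    obtain ⟨n, hfr, hfn, hVeq⟩ := hVspec u hu
    have hVopen : IsOpen (V u) := by rw [hVeq]; exact VorAux.isOpen_ViA n
    have hVsub : V u ⊆ ball u R₀ := by
      rw [hVeq, VorAux.ViA_of_fresh hfr, hfn]
      exact VorAux.cellA_subset u _ (hsmall u hu)
    have hgV : VorAux.gpt D u ∉ V u := by
      rw [hVeq, VorAux.ViA_of_fresh hfr, hfn]
      apply VorAux.gpt_not_mem_cellA
      rcases VorAux.gpt_spec D u with ⟨hgD, hgne⟩ | ⟨hgeq, hall⟩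
      · intro hmem
        rw [mem_ball] at hmem
        rw [hs] at hmem
        have h1 := VorAux.rSep_le hgD hu hgne
        have h2 : r ≤ rSep D := VorAux.le_rSep hdisc ⟨_, hgD, _, hu, hgne⟩
        linarith
      · intro hmem
        rw [mem_ball, hgeq, dist_self] at hmem
        have h0 : rSep D = 0 := VorAux.rSep_eq_zero
          (by rintro ⟨a, ha, b, hb, hab⟩; exact hab ((hall a ha).trans (hall b hb).symm))
        rw [hs, h0] at hmem
        norm_num at hmem
    have hCne : ((V u)ᶜ).Nonempty := ⟨_, hgV⟩
    set A : ℕ → Set X := fun k => V u \ {x : X | 1/(k+1 : ℝ) < infDist x ((V u)ᶜ)} with hA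
    have hmeasA : ∀ k, NullMeasurableSet (A k) μ := fun k =>
      ((hVopen.measurableSet).diff
        (isOpen_lt continuous_const (continuous_infDist_pt _)).measurableSet).nullMeasurableSet
    have hanti : Antitone A := by
      intro k l hkl
      apply diff_subset_diff_right
      intro y hy
      simp only [mem_setOf_eq] at hy ⊢
      have h1 : (1:ℝ)/(l+1) ≤ 1/(k+1) := by
        apply one_div_le_one_div_of_le (by positivity)
        have := (Nat.cast_le (α := ℝ)).2 hkl
        linarith
      exact lt_of_le_of_lt h1 hy
    have hiA : ⋂ k, A k = ∅ := by
      ext y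
      simp only [mem_iInter, mem_empty_iff_false, iff_false]
      intro hy
      have hyV : y ∈ V u := (hy 0).1
      have hpos : 0 < infDist y ((V u)ᶜ) := by
        by_contra hc
        push_neg at hc
        have h0 : infDist y ((V u)ᶜ) = 0 := le_antisymm hc infDist_nonneg
        have h1 : y ∈ closure ((V u)ᶜ) := (mem_closure_iff_infDist_zero hCne).2 h0
        rw [hVopen.isClosed_compl.closure_eq] at h1
        exact h1 hyV
      obtain ⟨k, hk⟩ := exists_nat_gt (1 / infDist y ((V u)ᶜ))
      apply (hy k).2
      simp only [mem_setOf_eq]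
      have hk1 : 1 / infDist y ((V u)ᶜ) < (k:ℝ) + 1 := hk.trans (by linarith)
      exact (one_div_lt hpos (by positivity)).1 hk1
    obtain ⟨c₀, C₀, hc₀, hC₀, hb₀⟩ := hbg R₀ hR₀pos
    have hAfin : μ (A 0) ≠ ∞ := by
      have h1 : A 0 ⊆ ball u R₀ := (diff_subset).trans hVsub
      exact ((measure_mono h1).trans_lt (lt_of_le_of_lt (hb₀ u).2 hC₀)).ne
    have htend := tendsto_measure_iInter_atTop (μ := μ) hmeasA hanti ⟨0, hAfin⟩
    rw [hiA] at htend
    simp only [measure_empty] at htend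
    obtain ⟨k, hk⟩ := (htend.eventually (Iio_mem_nhds hε)).exists
    exact ⟨1/(k+1 : ℝ), by positivity, hk⟩
  · -- V4
    intro u hu
    apply VorAux.infinite_dim μ hbg hiso
    · obtain ⟨n, hfr, hfn, hVeq⟩ := hVspec u hu
      rw [hVeq]
      exact VorAux.isOpen_ViA n
    · by_cases hsx : 0 < s
      · exact ⟨u, hV1 u hu (mem_ball_self hsx)⟩
      · have hall : ∀ w ∈ D, w = u := by
          intro w hw
          by_contra hne
          have h1 := VorAux.le_rSep hdisc ⟨w, hw, u, hu, hne⟩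
          rw [hs] at hsx
          push_neg at hsx
          linarith
        obtain ⟨y, hy1, hy2⟩ := VorAux.exists_near hiso u R₀ hR₀pos
        exact ⟨y, hsing_sub u hu hall ⟨mem_ball.2 hy1, hy2⟩⟩
end

section
/- Let (X,d,μ) be a proper metric measure space of bounded geometry, let V ⊆ X be an open set such that for every ε > 0 there exists δ > 0 with μ(V \ V^{(-δ)}) < ε, where V^{(-δ)} = {x ∈ X : d(x, X \ V) > δ}. For each n ∈ ℕ let D_n ⊆ X be an (r_n, R_n)-Delone set with lim_{n→∞} R_n = 0, and let {φ^n_v}_{v∈D_n} be Borel measurable functions φ^n_v : X → [0,1] with φ^n_v(x) = 0 whenever d(x,v) ≥ 2R_n and Σ_{v∈D_n} φ^n_v(x) = 1 for all x ∈ X. Let Q_n denote the orthogonal projection of L²(V,μ) onto the closure of the linear span of {φ^n_v : v ∈ D_n, supp φ^n_v ⊆ V}. Then Q_n converges strongly to the identity operator on L²(V,μ): for every f ∈ L²(V,μ), ‖Q_n f - f‖_{L²(V)} → 0 as n → ∞. -/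
open Metric Set MeasureTheory Filter ENNReal

lemma discrete_inter_compact_finite {X : Type*} [MetricSpace X] {r : ℝ} (hr : 0 < r) {D : Set X}
    (hD : IsDiscreteWith r D) {Kc : Set X} (hK : IsCompact Kc) : (D ∩ Kc).Finite := by
  obtain ⟨t, htfin, hcover⟩ := totallyBounded_iff.mp hK.totallyBounded (r / 2) (by positivity)
  have hsub : D ∩ Kc ⊆ ⋃ y ∈ t, D ∩ ball y (r / 2) := by
    intro x hx
    obtain ⟨y, hyt, hxy⟩ := mem_iUnion₂.mp (hcover hx.2)
    exact mem_iUnion₂.mpr ⟨y, hyt, hx.1, hxy⟩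
  refine Set.Finite.subset (htfin.biUnion fun y _ => ?_) hsub
  refine Set.Subsingleton.finite fun a ha b hb => ?_
  by_contra hab
  have h1 := mem_ball.mp ha.2
  have h2 := mem_ball.mp hb.2
  have h3 : dist a b ≤ dist a y + dist y b := dist_triangle a y b
  rw [dist_comm y b] at h3
  linarith [hD a ha.1 b hb.1 hab]

lemma measure_ball_lt_top' {X : Type*} [MetricSpace X] [MeasurableSpace X]
    {μ : Measure X} (hbg : BoundedGeometry μ) (x : X) (ρ : ℝ) : μ (ball x ρ) < ⊤ := by
  rcases le_or_gt ρ 0 with hρ | hρ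
  · simp [ball_eq_empty.mpr hρ]
  · obtain ⟨c, C, hc, hC, hb⟩ := hbg ρ hρ
    exact lt_of_le_of_lt (hb x).2 hC

lemma norm_proj_sub_le {E : Type*} [NormedAddCommGroup E] [InnerProductSpace ℂ E]
    {K : Submodule ℂ E} {f q g : E} (hq : q ∈ K) (hperp : f - q ∈ Kᗮ) (hg : g ∈ K) :
    ‖q - f‖ ≤ ‖f - g‖ := by
  have h0 : (inner ℂ (f - q) (q - g) : ℂ) = 0 :=
    (Submodule.mem_orthogonal' K (f - q)).mp hperp _ (Submodule.sub_mem K hq hg)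
  have hsq : ‖f - g‖ * ‖f - g‖ = ‖f - q‖ * ‖f - q‖ + ‖q - g‖ * ‖q - g‖ := by
    have hfg : f - g = (f - q) + (q - g) := by abel
    rw [hfg, norm_add_sq_eq_norm_sq_add_norm_sq_of_inner_eq_zero _ _ h0]
  rw [norm_sub_rev q f]
  nlinarith [norm_nonneg (f - q), norm_nonneg (f - g), sq_nonneg ‖q - g‖]

lemma coeFn_finset_sum_toLp {α ι : Type*} [MeasurableSpace α] {m : Measure α}
    (s : Finset ι) (f : ι → α → ℂ) (hf : ∀ i, MemLp (f i) 2 m) (c : ι → ℂ) :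
    (((∑ i ∈ s, c i • ((hf i).toLp (f i))) : Lp ℂ 2 m) : α → ℂ)
      =ᵐ[m] fun x => ∑ i ∈ s, c i * f i x := by
  classical
  induction s using Finset.cons_induction with
  | empty => simp only [Finset.sum_empty]; exact Lp.coeFn_zero ℂ 2 m
  | cons i s his ih =>
    simp only [Finset.sum_cons]
    filter_upwards [Lp.coeFn_add (c i • (hf i).toLp (f i)) (∑ j ∈ s, c j • (hf j).toLp (f j)),
      Lp.coeFn_smul (c i) ((hf i).toLp (f i)), (hf i).coeFn_toLp, ih] with x h1 h2 h3 h4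
    simp only [h1, Pi.add_apply, h2, Pi.smul_apply, h3, h4, smul_eq_mul]

/-- Let `V` be an open set whose inner boundary layers have small measure. The orthogonal
projections `Q_n` of `L²(V,μ)` onto the spans of those members of the partitions of unity
subordinate to `D_n` whose supports lie in `V` converge strongly to the identity. -/
theorem projections_tendsto_id_on_cell {X : Type*} [MetricSpace X] [ProperSpace X]
    [MeasurableSpace X] [BorelSpace X] (μ : Measure X) (hbg : BoundedGeometry μ)
    (V : Set X) (hVopen : IsOpen V)
    (hshrink : ∀ ε : ℝ≥0∞, 0 < ε → ∃ δ : ℝ, 0 < δ ∧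
      μ (V \ {x : X | δ < Metric.infDist x Vᶜ}) < ε)
    (D : ℕ → Set X) (r R : ℕ → ℝ) (hr : ∀ n, 0 < r n)
    (hdisc : ∀ n, IsDiscreteWith (r n) (D n))
    (hdense : ∀ n, IsDenseWith (R n) (D n))
    (hR0 : Tendsto R atTop (nhds 0))
    (φ : ℕ → X → X → ℝ)
    (hmeas : ∀ n, ∀ v ∈ D n, Measurable (φ n v))
    (hrange : ∀ n, ∀ v ∈ D n, ∀ x : X, φ n v x ∈ Icc (0 : ℝ) 1)
    (hsupp : ∀ n, ∀ v ∈ D n, ∀ x : X, 2 * R n ≤ dist x v → φ n v x = 0)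
    (hsum : ∀ n, ∀ x : X, HasSum (fun v : D n => φ n v.1 x) 1)
    (K : ℕ → Submodule ℂ (Lp ℂ 2 (μ.restrict V)))
    (hK : ∀ n, K n = (Submodule.span ℂ
      {g : Lp ℂ 2 (μ.restrict V) | ∃ v ∈ D n, Function.support (φ n v) ⊆ V ∧
        (g : X → ℂ) =ᵐ[μ.restrict V] fun x => (φ n v x : ℂ)}).topologicalClosure)
    (Q : ℕ → Lp ℂ 2 (μ.restrict V) →L[ℂ] Lp ℂ 2 (μ.restrict V))
    (hQ : ∀ n, ∀ f : Lp ℂ 2 (μ.restrict V), Q n f ∈ K n ∧ f - Q n f ∈ (K n)ᗮ) :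
    ∀ f : Lp ℂ 2 (μ.restrict V), Tendsto (fun n => ‖Q n f - f‖) atTop (nhds 0) := by
  intro f
  have hVmeas : MeasurableSet V := hVopen.measurableSet
  -- key : eventual smallness
  have key : ∀ ε > (0 : ℝ), ∀ᶠ n in atTop, ‖Q n f - f‖ < ε := by
    intro ε hε
    rcases isEmpty_or_nonempty X with hXe | hXne
    · refine Eventually.of_forall fun n => ?_
      have hz : (⇑(Q n f - f) : X → ℂ) = 0 := funext fun x => (IsEmpty.false x).elim
      rw [Lp.norm_def, hz, eLpNorm_zero]
      simpa using hε
    -- instances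
    haveI : IsLocallyFiniteMeasure μ :=
      ⟨fun x => ⟨ball x 1, ball_mem_nhds x one_pos, measure_ball_lt_top' hbg x 1⟩⟩
    haveI : IsLocallyFiniteMeasure (μ.restrict V) := Measure.isLocallyFiniteMeasure_of_le Measure.restrict_le_self
    haveI : (μ.restrict V).Regular := inferInstance
    -- Memℒp of the bump functions
    have hmemφ : ∀ n (v : D n), MemLp (fun x => ((φ n v.1 x : ℝ) : ℂ)) 2 (μ.restrict V) := by
      intro n v
      constructor
      · exact (Complex.measurable_ofReal.comp (hmeas n v.1 v.2)).aestronglyMeasurable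
      · have hmono : ∀ x, ‖((φ n v.1 x : ℝ) : ℂ)‖ ≤
            ‖(ball v.1 (2 * R n)).indicator (fun _ => (1 : ℝ)) x‖ := by
          intro x
          by_cases hx : x ∈ ball v.1 (2 * R n)
          · rw [Set.indicator_of_mem hx]
            have h01 := hrange n v.1 v.2 x
            simp only [Complex.norm_real, Real.norm_eq_abs, abs_of_nonneg h01.1, abs_one]
            exact h01.2
          · have : φ n v.1 x = 0 := hsupp n v.1 v.2 x (not_lt.mp (fun hc => hx (mem_ball.mpr hc)))
            simp [this]
        calc eLpNorm (fun x => ((φ n v.1 x : ℝ) : ℂ)) 2 (μ.restrict V)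
            ≤ eLpNorm ((ball v.1 (2 * R n)).indicator fun _ => (1 : ℝ)) 2 (μ.restrict V) := eLpNorm_mono hmono
          _ = ‖(1 : ℝ)‖ₑ * (μ.restrict V) (ball v.1 (2 * R n)) ^ (1 / (2 : ℝ≥0∞).toReal) :=
              eLpNorm_indicator_const measurableSet_ball two_ne_zero ofNat_ne_top
          _ < ⊤ := by
              refine ENNReal.mul_lt_top (by simp) ?_
              refine ENNReal.rpow_lt_top_of_nonneg (by norm_num) ?_
              rw [Measure.restrict_apply measurableSet_ball]
              exact (lt_of_le_of_lt (measure_mono Set.inter_subset_left)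
                (measure_ball_lt_top' hbg v.1 (2 * R n))).ne
    -- approximate f by a continuous compactly supported function
    have hε4 : (0 : ℝ) < ε / 4 := by linarith
    obtain ⟨h, h_supp, h_close, h_cont, h_mem⟩ :=
      (Lp.memLp f).exists_hasCompactSupport_eLpNorm_sub_le (by simp : (2 : ℝ≥0∞) ≠ ∞)
        (ne_of_gt (ENNReal.ofReal_pos.mpr hε4))
    -- sup bound on h
    obtain ⟨xM, hxM⟩ := (h_cont.norm).exists_forall_ge_of_hasCompactSupport h_supp.norm
    set M : ℝ := ‖h xM‖ with hMdef
    have hM : ∀ x, ‖h x‖ ≤ M := hxM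
    have hM0 : 0 ≤ M := norm_nonneg _
    -- uniform continuity of h
    have hu : UniformContinuous h := h_supp.uniformContinuous_of_continuous h_cont
    -- bounded support of h
    obtain ⟨x0⟩ := hXne
    obtain ⟨ρ₀, hρ₀⟩ := (h_supp.isBounded).subset_closedBall x0
    set ρ : ℝ := max ρ₀ 0 with hρdef
    have hρ0 : 0 ≤ ρ := le_max_right _ _
    have hρ2 : tsupport h ⊆ closedBall x0 ρ :=
      hρ₀.trans (closedBall_subset_closedBall (le_max_left _ _))
    set B : Set X := ball x0 (ρ + 5) with hBdef
    obtain ⟨c₀, C, hc₀, hC, hCb⟩ := hbg (ρ + 5) (by linarith)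
    have hνB : μ.restrict V B ≤ C := by
      rw [Measure.restrict_apply measurableSet_ball]
      exact le_trans (measure_mono Set.inter_subset_left) (hCb x0).2
    -- choice of η and the modulus t
    set s : ℝ := C.toReal ^ (1 / 2 : ℝ) with hsdef
    have hs0 : 0 ≤ s := Real.rpow_nonneg ENNReal.toReal_nonneg _
    set η : ℝ := (ε / 4) / (s + 1) with hηdef
    have hη : 0 < η := div_pos hε4 (by linarith)
    obtain ⟨t, ht0, htη⟩ := Metric.uniformContinuous_iff.mp hu η hη
    -- choice of δ
    set a : ℝ := (ε / 4) / (2 * M + 1) with hadef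
    have ha : 0 < a := div_pos hε4 (by linarith)
    set ε₂ : ℝ≥0∞ := (ENNReal.ofReal a) ^ (2 : ℝ) with hε₂def
    have hε₂pos : 0 < ε₂ := ENNReal.rpow_pos (ENNReal.ofReal_pos.mpr ha) ENNReal.ofReal_ne_top
    obtain ⟨δ, hδ0, hδμ⟩ := hshrink ε₂ hε₂pos
    -- eventual n
    have hmpos : (0 : ℝ) < min 1 (min (t / 2) (δ / 4)) := by
      refine lt_min one_pos (lt_min (by linarith) (by linarith))
    filter_upwards [hR0.eventually_lt_const hmpos] with n hn
    have hn1 : R n < 1 := lt_of_lt_of_le hn (min_le_left _ _)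
    have h2Rt : 2 * R n < t := by
      have := lt_of_lt_of_le hn ((min_le_right _ _).trans (min_le_left _ _))
      linarith
    have h4Rδ : 4 * R n < δ := by
      have := lt_of_lt_of_le hn ((min_le_right _ _).trans (min_le_right _ _))
      linarith
    -- the layer W
    set W : Set X := {x : X | 4 * R n < infDist x Vᶜ} with hWdef
    have hWmeas : MeasurableSet W :=
      (isOpen_lt continuous_const (continuous_infDist_pt Vᶜ)).measurableSet
    have hνVW : μ.restrict V (V \ W) ≤ ε₂ := by
      rw [Measure.restrict_apply (hVmeas.diff hWmeas),
        Set.inter_eq_self_of_subset_left diff_subset]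
      refine le_trans (measure_mono ?_) hδμ.le
      intro x hx
      exact ⟨hx.1, fun hmem => hx.2 (lt_trans h4Rδ hmem)⟩
    -- inside W all relevant bumps have support in V
    have hWsupp : ∀ x ∈ W, ∀ v ∈ D n, φ n v x ≠ 0 → Function.support (φ n v) ⊆ V := by
      intro x hx v hv hφx y hy
      by_contra hyV
      have h1 : dist x v < 2 * R n := by
        by_contra hle; exact hφx (hsupp n v hv x (not_lt.mp hle))
      have h2 : dist y v < 2 * R n := by
        by_contra hle; exact hy (hsupp n v hv y (not_lt.mp hle))
      have h3 : infDist x Vᶜ ≤ dist x y := infDist_le_dist_of_mem hyV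
      have h4 : dist x y ≤ dist x v + dist v y := dist_triangle x v y
      rw [dist_comm v y] at h4
      have hx' : 4 * R n < infDist x Vᶜ := hx
      linarith
    -- the finite index set
    have hSfin : {v : ↥(D n) | h v.1 ≠ 0 ∧ Function.support (φ n v.1) ⊆ V}.Finite := by
      have himage : Subtype.val '' {v : ↥(D n) | h v.1 ≠ 0 ∧ Function.support (φ n v.1) ⊆ V}
          ⊆ D n ∩ tsupport h := by
        rintro x ⟨v, hv, rfl⟩
        exact ⟨v.2, subset_tsupport h (Function.mem_support.mpr hv.1)⟩
      refine Set.Finite.of_finite_image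
        (Set.Finite.subset (discrete_inter_compact_finite (hr n) (hdisc n) h_supp) himage)
        Subtype.val_injective.injOn
    set F : Finset ↥(D n) := hSfin.toFinset with hFdef
    -- the approximating function and Lp element
    set gfun : X → ℂ := fun x => ∑ v ∈ F, h v.1 * ((φ n v.1 x : ℝ) : ℂ) with hgfundef
    set gLp : Lp ℂ 2 (μ.restrict V) := ∑ v ∈ F, h v.1 • (hmemφ n v).toLp _ with hgLpdef
    have hgK : gLp ∈ K n := by
      rw [hK n]
      refine Submodule.le_topologicalClosure _ ?_
      refine Submodule.sum_mem _ fun v hv => Submodule.smul_mem _ _ (Submodule.subset_span ?_)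
      exact ⟨v.1, v.2, (hSfin.mem_toFinset.mp hv).2, (hmemφ n v).coeFn_toLp⟩
    have hg_coe : (gLp : X → ℂ) =ᵐ[(μ.restrict V)] gfun :=
      coeFn_finset_sum_toLp F _ (hmemφ n) _
    -- pointwise estimates
    have hP1 : ∀ x ∈ W, ‖h x - gfun x‖ ≤ η := by
      intro x hxW
      have hterm : ∀ v : D n, v ∉ F → h v.1 * ((φ n v.1 x : ℝ) : ℂ) = 0 := by
        intro v hvF
        by_cases hhv : h v.1 = 0
        · simp [hhv]
        by_cases hφ : φ n v.1 x = 0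
        · simp [hφ]
        · exact absurd (hSfin.mem_toFinset.mpr ⟨hhv, hWsupp x hxW v.1 v.2 hφ⟩) hvF
      have hsum1 : HasSum (fun v : D n => h v.1 * ((φ n v.1 x : ℝ) : ℂ)) (gfun x) :=
        hasSum_sum_of_ne_finset_zero hterm
      have hsumC : HasSum (fun v : D n => ((φ n v.1 x : ℝ) : ℂ)) 1 := by
        simpa using (hsum n x).mapL Complex.ofRealCLM
      have hsum2 : HasSum (fun v : D n => h x * ((φ n v.1 x : ℝ) : ℂ)) (h x) := by
        simpa using hsumC.mul_left (h x)
      have hsum3 : HasSum (fun v : D n => (h x - h v.1) * ((φ n v.1 x : ℝ) : ℂ))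
          (h x - gfun x) := by
        simpa [sub_mul] using hsum2.sub hsum1
      have hb : HasSum (fun v : D n => η * φ n v.1 x) η := by
        simpa using (hsum n x).mul_left η
      have hnormle : ∀ v : D n, ‖(h x - h v.1) * ((φ n v.1 x : ℝ) : ℂ)‖ ≤ η * φ n v.1 x := by
        intro v
        by_cases hφ : φ n v.1 x = 0
        · simp [hφ]
        · have hdist : dist x v.1 < 2 * R n := by
            by_contra hle; exact hφ (hsupp n v.1 v.2 x (not_lt.mp hle))
          have hdη : dist (h x) (h v.1) < η := htη (by linarith : dist x v.1 < t)
          have h01 := hrange n v.1 v.2 x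
          rw [norm_mul, Complex.norm_real, Real.norm_eq_abs, abs_of_nonneg h01.1]
          have hnle : ‖h x - h v.1‖ ≤ η := by rw [← dist_eq_norm]; exact hdη.le
          exact mul_le_mul_of_nonneg_right hnle h01.1
      have hsummable : Summable fun v : D n => ‖(h x - h v.1) * ((φ n v.1 x : ℝ) : ℂ)‖ :=
        Summable.of_nonneg_of_le (fun v => norm_nonneg _) hnormle hb.summable
      calc ‖h x - gfun x‖ = ‖∑' v : D n, (h x - h v.1) * ((φ n v.1 x : ℝ) : ℂ)‖ := by
            rw [hsum3.tsum_eq]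
        _ ≤ ∑' v : D n, ‖(h x - h v.1) * ((φ n v.1 x : ℝ) : ℂ)‖ :=
            norm_tsum_le_tsum_norm hsummable
        _ ≤ ∑' v : D n, η * φ n v.1 x := Summable.tsum_le_tsum hnormle hsummable hb.summable
        _ = η := hb.tsum_eq
    have hgM : ∀ x : X, ‖gfun x‖ ≤ M := by
      intro x
      calc ‖gfun x‖ ≤ ∑ v ∈ F, ‖h v.1 * ((φ n v.1 x : ℝ) : ℂ)‖ := norm_sum_le _ _
        _ ≤ ∑ v ∈ F, M * φ n v.1 x := by
            refine Finset.sum_le_sum fun v _ => ?_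
            have h01 := hrange n v.1 v.2 x
            rw [norm_mul, Complex.norm_real, Real.norm_eq_abs, abs_of_nonneg h01.1]
            exact mul_le_mul_of_nonneg_right (hM v.1) h01.1
        _ = M * ∑ v ∈ F, φ n v.1 x := by rw [Finset.mul_sum]
        _ ≤ M * 1 := mul_le_mul_of_nonneg_left
            (sum_le_hasSum F (fun v _ => (hrange n v.1 v.2 x).1) (hsum n x)) hM0
        _ = M := mul_one M
    have hvanish : ∀ x : X, x ∉ B → h x - gfun x = 0 := by
      intro x hxB
      have hhx : h x = 0 := by
        apply image_eq_zero_of_notMem_tsupport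
        intro hxt
        exact hxB (mem_ball.mpr (lt_of_le_of_lt (mem_closedBall.mp (hρ2 hxt)) (by linarith)))
      have hgx : gfun x = 0 := by
        apply Finset.sum_eq_zero
        intro v hvF
        have hhv := (hSfin.mem_toFinset.mp hvF).1
        by_cases hφ : φ n v.1 x = 0
        · simp [hφ]
        · exfalso
          have hdist : dist x v.1 < 2 * R n := by
            by_contra hle; exact hφ (hsupp n v.1 v.2 x (not_lt.mp hle))
          have hv0 : dist v.1 x0 ≤ ρ :=
            mem_closedBall.mp (hρ2 (subset_tsupport h (Function.mem_support.mpr hhv)))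
          have htri : dist x x0 ≤ dist x v.1 + dist v.1 x0 := dist_triangle _ _ _
          exact hxB (mem_ball.mpr (by linarith))
      rw [hhx, hgx, sub_zero]
    -- the difference function
    set u : X → ℂ := fun x => h x - gfun x with hudef
    have hgfun_meas : Measurable gfun := by
      apply Finset.measurable_sum
      intro v _
      exact measurable_const.mul (Complex.measurable_ofReal.comp (hmeas n v.1 v.2))
    have hauesm : AEStronglyMeasurable u (μ.restrict V) :=
      (h_cont.measurable.sub hgfun_meas).aestronglyMeasurable
    -- the two L² bounds
    have hbound1 : eLpNorm (W.indicator u) 2 (μ.restrict V) ≤ ENNReal.ofReal (ε / 4) := by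
      have hmono : ∀ x, ‖W.indicator u x‖ ≤ ‖B.indicator (fun _ => η) x‖ := by
        intro x
        by_cases hxW : x ∈ W
        · rw [Set.indicator_of_mem hxW]
          by_cases hxB : x ∈ B
          · rw [Set.indicator_of_mem hxB, Real.norm_eq_abs, abs_of_nonneg hη.le]
            exact hP1 x hxW
          · rw [show u x = 0 from hvanish x hxB]; simp
        · rw [Set.indicator_of_notMem hxW]; simp
      calc eLpNorm (W.indicator u) 2 (μ.restrict V) ≤ eLpNorm (B.indicator fun _ => η) 2 (μ.restrict V) :=
            eLpNorm_mono hmono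
        _ = ‖η‖ₑ * (μ.restrict V) B ^ (1 / (2 : ℝ≥0∞).toReal) :=
            eLpNorm_indicator_const measurableSet_ball two_ne_zero ofNat_ne_top
        _ ≤ ENNReal.ofReal η * C ^ (1 / 2 : ℝ) := by
            rw [Real.enorm_eq_ofReal hη.le]
            refine mul_le_mul_right ?_ _
            rw [show (1 / (2 : ℝ≥0∞).toReal) = (1 / 2 : ℝ) by norm_num]
            exact ENNReal.rpow_le_rpow hνB (by norm_num)
        _ ≤ ENNReal.ofReal (ε / 4) := by
            rw [← ENNReal.ofReal_toReal hC.ne,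
              ENNReal.ofReal_rpow_of_nonneg ENNReal.toReal_nonneg (by norm_num : (0:ℝ) ≤ 1/2),
              ← ENNReal.ofReal_mul hη.le]
            refine ENNReal.ofReal_le_ofReal ?_
            have : η * (s + 1) = ε / 4 := div_mul_cancel₀ _ (by linarith)
            nlinarith [hη.le, hs0]
    have hbound2 : eLpNorm (Wᶜ.indicator u) 2 (μ.restrict V) ≤ ENNReal.ofReal (ε / 4) := by
      have hmono : ∀ᵐ x ∂(μ.restrict V), ‖Wᶜ.indicator u x‖ ≤
          ‖(V \ W).indicator (fun _ => (2 * M + 1 : ℝ)) x‖ := by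
        filter_upwards [ae_restrict_mem hVmeas] with x hxV
        by_cases hxW : x ∈ W
        · rw [Set.indicator_of_notMem (by simpa using hxW)]; simp
        · rw [Set.indicator_of_mem (Set.mem_compl hxW), Set.indicator_of_mem (show x ∈ V \ W from ⟨hxV, hxW⟩)]
          have hle : ‖u x‖ ≤ 2 * M + 1 := by
            calc ‖h x - gfun x‖ ≤ ‖h x‖ + ‖gfun x‖ := norm_sub_le _ _
              _ ≤ M + M := add_le_add (hM x) (hgM x)
              _ ≤ 2 * M + 1 := by linarith
          rw [Real.norm_eq_abs, abs_of_nonneg (by linarith : (0:ℝ) ≤ 2 * M + 1)]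
          exact hle
      calc eLpNorm (Wᶜ.indicator u) 2 (μ.restrict V)
          ≤ eLpNorm ((V \ W).indicator fun _ => (2 * M + 1 : ℝ)) 2 (μ.restrict V) := eLpNorm_mono_ae hmono
        _ = ‖(2 * M + 1 : ℝ)‖ₑ * (μ.restrict V) (V \ W) ^ (1 / (2 : ℝ≥0∞).toReal) :=
            eLpNorm_indicator_const (hVmeas.diff hWmeas) two_ne_zero ofNat_ne_top
        _ ≤ ENNReal.ofReal (2 * M + 1) * ε₂ ^ (1 / 2 : ℝ) := by
            rw [Real.enorm_eq_ofReal (by linarith)]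
            refine mul_le_mul_right ?_ _
            rw [show (1 / (2 : ℝ≥0∞).toReal) = (1 / 2 : ℝ) by norm_num]
            exact ENNReal.rpow_le_rpow hνVW (by norm_num)
        _ = ENNReal.ofReal (ε / 4) := by
            have hε₂half : ε₂ ^ (1 / 2 : ℝ) = ENNReal.ofReal a := by
              rw [hε₂def, ← ENNReal.rpow_mul]
              norm_num
            rw [hε₂half, ← ENNReal.ofReal_mul (by linarith)]
            congr 1
            rw [hadef, mul_comm, div_mul_cancel₀ _ (ne_of_gt (by linarith : (0:ℝ) < 2 * M + 1))]
    -- assembling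
    have hsplitle : eLpNorm u 2 (μ.restrict V) ≤
        eLpNorm (W.indicator u) 2 (μ.restrict V) + eLpNorm (Wᶜ.indicator u) 2 (μ.restrict V) := by
      conv_lhs => rw [show u = W.indicator u + Wᶜ.indicator u from
        (Set.indicator_self_add_compl W u).symm]
      exact eLpNorm_add_le (hauesm.indicator hWmeas) (hauesm.indicator hWmeas.compl) one_le_two
    have hchain : eLpNorm (⇑f - gfun) 2 (μ.restrict V) < ENNReal.ofReal ε := by
      have heq : (⇑f - gfun) = (⇑f - h) + u := by
        funext x; simp only [Pi.sub_apply, Pi.add_apply, hudef]; ring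
      rw [heq]
      calc eLpNorm ((⇑f - h) + u) 2 (μ.restrict V) ≤ eLpNorm (⇑f - h) 2 (μ.restrict V) + eLpNorm u 2 (μ.restrict V) :=
            eLpNorm_add_le ((Lp.aestronglyMeasurable f).sub h_cont.aestronglyMeasurable)
              hauesm one_le_two
        _ ≤ ENNReal.ofReal (ε / 4) +
            (ENNReal.ofReal (ε / 4) + ENNReal.ofReal (ε / 4)) := by
            refine add_le_add h_close (hsplitle.trans (add_le_add hbound1 hbound2))
        _ < ENNReal.ofReal ε := by
            rw [← ENNReal.ofReal_add hε4.le hε4.le, ← ENNReal.ofReal_add hε4.le (by linarith)]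
            exact (ENNReal.ofReal_lt_ofReal_iff hε).mpr (by linarith)
    have hnorm : ‖f - gLp‖ < ε := by
      rw [Lp.norm_def]
      refine ENNReal.toReal_lt_of_lt_ofReal ?_
      have hae : (⇑(f - gLp) : X → ℂ) =ᵐ[(μ.restrict V)] (⇑f - gfun) := by
        filter_upwards [Lp.coeFn_sub f gLp, hg_coe] with x h1 h2
        rw [h1, Pi.sub_apply, Pi.sub_apply, h2]
      rw [eLpNorm_congr_ae hae]
      exact hchain
    exact lt_of_le_of_lt (norm_proj_sub_le (hQ n f).1 (hQ n f).2 hgK) hnorm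
  -- conclude
  have hnn : ∀ n, 0 ≤ ‖Q n f - f‖ := fun n => norm_nonneg _
  rw [Metric.tendsto_atTop]
  intro ε hε
  obtain ⟨N, hN⟩ := (key ε hε).exists_forall_of_atTop
  exact ⟨N, fun n hn => by
    rw [Real.dist_eq, sub_zero, abs_of_nonneg (hnn n)]
    exact hN n hn⟩
end
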